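/- arXiv:solv-int/9907008 — 3 statements merged into one kernel-verified Lean document; each statement's English description precedes it below -/
import Mathlib

section
/- For every integer n > 0 and real numbers x_0 < x_1 < ... < x_{2n-1}, the sum over all n-element subsets S of {0,1,...,2n-1} of Δ(x_S)·Δ(x_{S^c}) equals 2^n · Δ(x_{even indices}) · Δ(x_{odd indices}), where x_S denotes the tuple of x_i for i ∈ S in increasing order. -/
/-- The Vandermonde product over the indices in a finite set `S`:
`∏_{i<j, i,j ∈ S} (x j - x i)`.  Since `x` is strictly increasing, this equals
the Vandermonde product of the increasingly ordered tuple `x_S`. -/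
def vand {m : ℕ} (x : Fin m → ℝ) (S : Finset (Fin m)) : ℝ :=
  ∏ p ∈ (S ×ˢ S).filter (fun p => p.1 < p.2), (x p.2 - x p.1)

open Finset Equiv Equiv.Perm Sum

namespace SVP

/-- equivalence between `Fin n ⊕ Fin n` and `Fin (2*n)`. -/
def EE (n : ℕ) : Fin n ⊕ Fin n ≃ Fin (2*n) := finSumFinEquiv.trans (finCongr (two_mul n).symm)

lemma EE_inl {n : ℕ} (a : Fin n) : ((EE n (Sum.inl a)) : ℕ) = a := by
  simp [EE]

lemma EE_inr {n : ℕ} (b : Fin n) : ((EE n (Sum.inr b)) : ℕ) = n + b := by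
  simp [EE]; omega

lemma card_compl_eq {n : ℕ} (S : Finset (Fin (2*n))) (hS : S.card = n) : Sᶜ.card = n := by
  rw [Finset.card_compl, hS, Fintype.card_fin]; omega

def shuffleFun {n : ℕ} (S : Finset (Fin (2*n))) (hS : S.card = n) : Fin n ⊕ Fin n → Fin (2*n) :=
  Sum.elim (S.orderEmbOfFin hS) ((Sᶜ).orderEmbOfFin (card_compl_eq S hS))

lemma shuffleFun_bij {n : ℕ} (S : Finset (Fin (2*n))) (hS : S.card = n) :
    Function.Bijective (shuffleFun S hS) := by
  rw [Fintype.bijective_iff_injective_and_card]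
  constructor
  · rintro (a | a) (b | b) h <;> simp only [shuffleFun, Sum.elim_inl, Sum.elim_inr] at h
    · exact congrArg Sum.inl ((S.orderEmbOfFin hS).injective h)
    · exfalso
      have h1 := S.orderEmbOfFin_mem hS a
      have h2 := (Sᶜ).orderEmbOfFin_mem (card_compl_eq S hS) b
      rw [h] at h1
      exact (Finset.mem_compl.mp h2) h1
    · exfalso
      have h1 := S.orderEmbOfFin_mem hS b
      have h2 := (Sᶜ).orderEmbOfFin_mem (card_compl_eq S hS) a
      rw [← h] at h1
      exact (Finset.mem_compl.mp h2) h1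
    · exact congrArg Sum.inr ((Sᶜ.orderEmbOfFin (card_compl_eq S hS)).injective h)
  · simp [Fintype.card_sum]; omega

/-- The "shuffle" permutation sending the first block to `S` increasingly and the
second block to `Sᶜ` increasingly. -/
noncomputable def shuffle (n : ℕ) (S : Finset (Fin (2*n))) : Equiv.Perm (Fin (2*n)) :=
  if hS : S.card = n then (EE n).symm.trans (Equiv.ofBijective _ (shuffleFun_bij S hS)) else 1

lemma shuffle_apply_inl {n : ℕ} {S : Finset (Fin (2*n))} (hS : S.card = n) (a : Fin n) :
    shuffle n S (EE n (Sum.inl a)) = S.orderEmbOfFin hS a := by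
  rw [shuffle, dif_pos hS]
  simp [Equiv.trans_apply, Equiv.ofBijective_apply, shuffleFun]

lemma shuffle_apply_inr {n : ℕ} {S : Finset (Fin (2*n))} (hS : S.card = n) (hc : Sᶜ.card = n)
    (b : Fin n) : shuffle n S (EE n (Sum.inr b)) = Sᶜ.orderEmbOfFin hc b := by
  rw [shuffle, dif_pos hS]
  simp [Equiv.trans_apply, Equiv.ofBijective_apply, shuffleFun]

def blockPerm {n : ℕ} (τ : Equiv.Perm (Fin n) × Equiv.Perm (Fin n)) : Equiv.Perm (Fin (2*n)) :=
  (EE n).permCongr (Equiv.sumCongr τ.1 τ.2)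

lemma blockPerm_apply_inl {n : ℕ} (τ : Equiv.Perm (Fin n) × Equiv.Perm (Fin n)) (a : Fin n) :
    blockPerm τ (EE n (Sum.inl a)) = EE n (Sum.inl (τ.1 a)) := by
  simp [blockPerm]

lemma blockPerm_apply_inr {n : ℕ} (τ : Equiv.Perm (Fin n) × Equiv.Perm (Fin n)) (b : Fin n) :
    blockPerm τ (EE n (Sum.inr b)) = EE n (Sum.inr (τ.2 b)) := by
  simp [blockPerm]

lemma sign_blockPerm {n : ℕ} (τ : Equiv.Perm (Fin n) × Equiv.Perm (Fin n)) :
    Equiv.Perm.sign (blockPerm τ) = Equiv.Perm.sign τ.1 * Equiv.Perm.sign τ.2 := by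
  rw [blockPerm, Equiv.Perm.sign_permCongr, Equiv.Perm.sign_sumCongr]

end SVP

namespace SVP

lemma prod_pairs {m k : ℕ} (x : Fin m → ℝ) (T : Finset (Fin m)) (h : T.card = k) :
    (∏ i : Fin k, ∏ j ∈ Finset.Ioi i,
      (x (T.orderEmbOfFin h j) - x (T.orderEmbOfFin h i))) = vand x T := by
  rw [vand, Finset.prod_sigma' Finset.univ (fun i => Finset.Ioi i)
    (fun i j => (x (T.orderEmbOfFin h j) - x (T.orderEmbOfFin h i)))]
  refine Finset.prod_nbij (fun p => (T.orderEmbOfFin h p.1, T.orderEmbOfFin h p.2)) ?_ ?_ ?_ ?_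
  · rintro ⟨i, j⟩ hij
    simp only [Finset.mem_sigma, Finset.mem_univ, Finset.mem_Ioi, true_and] at hij
    simp only [Finset.mem_filter, Finset.mem_product]
    exact ⟨⟨T.orderEmbOfFin_mem h i, T.orderEmbOfFin_mem h j⟩,
      (T.orderEmbOfFin h).strictMono hij⟩
  · rintro ⟨i, j⟩ - ⟨i', j'⟩ - hp
    simp only [Prod.mk.injEq] at hp
    have e1 := (T.orderEmbOfFin h).injective hp.1
    have e2 := (T.orderEmbOfFin h).injective hp.2
    simp [e1, e2]
  · rintro ⟨u, v⟩ huv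
    simp only [Finset.coe_filter, Finset.mem_product, Set.mem_setOf_eq] at huv
    obtain ⟨⟨hu, hv⟩, hlt⟩ := huv
    have hu' : u ∈ Set.range (T.orderEmbOfFin h) := by
      rw [Finset.range_orderEmbOfFin]; exact hu
    have hv' : v ∈ Set.range (T.orderEmbOfFin h) := by
      rw [Finset.range_orderEmbOfFin]; exact hv
    obtain ⟨i, rfl⟩ := hu'
    obtain ⟨j, rfl⟩ := hv'
    refine ⟨⟨i, j⟩, ?_, rfl⟩
    simp only [Finset.coe_sigma, Set.mem_sigma_iff, Finset.mem_coe, Finset.mem_univ,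
      Finset.mem_Ioi, true_and]
    exact (T.orderEmbOfFin h).lt_iff_lt.mp hlt
  · rintro ⟨i, j⟩ -
    rfl

lemma univ_orderEmbOfFin {k : ℕ} (h : (Finset.univ : Finset (Fin k)).card = k) (i : Fin k) :
    (Finset.univ : Finset (Fin k)).orderEmbOfFin h i = i := by
  have := Finset.orderEmbOfFin_unique h (f := fun i : Fin k => i)
    (fun x => Finset.mem_univ x) strictMono_id
  exact (congrFun this i).symm

lemma vand_univ {k : ℕ} (y : Fin k → ℝ) :
    (∏ i : Fin k, ∏ j ∈ Finset.Ioi i, (y j - y i)) = vand y Finset.univ := by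
  have h : (Finset.univ : Finset (Fin k)).card = k := by simp
  rw [← prod_pairs y Finset.univ h]
  simp [univ_orderEmbOfFin h]

lemma vand_pos {m : ℕ} {x : Fin m → ℝ} (hx : StrictMono x) (S : Finset (Fin m)) :
    0 < vand x S := by
  refine Finset.prod_pos ?_
  rintro ⟨i, j⟩ hij
  simp only [Finset.mem_filter, Finset.mem_product] at hij
  exact sub_pos.mpr (hx hij.2)

end SVP

namespace SVP

lemma image_block {n : ℕ} (S : Finset (Fin (2*n))) (hS : S.card = n)
    (τ : Equiv.Perm (Fin n) × Equiv.Perm (Fin n)) :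
    Finset.image (fun a : Fin n => (shuffle n S * blockPerm τ) (EE n (Sum.inl a)))
      Finset.univ = S := by
  ext v
  simp only [Finset.mem_image, Finset.mem_univ, true_and]
  constructor
  · rintro ⟨a, rfl⟩
    rw [Equiv.Perm.mul_apply, blockPerm_apply_inl, shuffle_apply_inl hS]
    exact S.orderEmbOfFin_mem hS _
  · intro hv
    have : v ∈ Set.range (S.orderEmbOfFin hS) := by
      rw [Finset.range_orderEmbOfFin]; exact hv
    obtain ⟨a', ha'⟩ := this
    refine ⟨τ.1⁻¹ a', ?_⟩
    rw [Equiv.Perm.mul_apply, blockPerm_apply_inl, Equiv.Perm.inv_def, Equiv.apply_symm_apply,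
      shuffle_apply_inl hS, ha']

lemma laplace {n : ℕ} (M : Matrix (Fin (2*n)) (Fin (2*n)) ℝ) :
    M.det = ∑ S ∈ Finset.powersetCard n (Finset.univ : Finset (Fin (2*n))),
      ((Equiv.Perm.sign (shuffle n S) : ℤ) : ℝ) *
      ((Matrix.of fun a b : Fin n =>
          M (shuffle n S (EE n (Sum.inl a))) (EE n (Sum.inl b))).det *
       (Matrix.of fun a b : Fin n =>
          M (shuffle n S (EE n (Sum.inr a))) (EE n (Sum.inr b))).det) := by
  classical
  rw [Matrix.det_apply']
  have hterm : ∀ (S : Finset (Fin (2*n))) (τ : Equiv.Perm (Fin n) × Equiv.Perm (Fin n)),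
      ((Equiv.Perm.sign (shuffle n S * blockPerm τ) : ℤ) : ℝ) *
        ∏ k, M ((shuffle n S * blockPerm τ) k) k
      = ((Equiv.Perm.sign (shuffle n S) : ℤ) : ℝ) *
        (((Equiv.Perm.sign τ.1 : ℤ) : ℝ) *
          ∏ a, M (shuffle n S (EE n (Sum.inl (τ.1 a)))) (EE n (Sum.inl a))) *
        (((Equiv.Perm.sign τ.2 : ℤ) : ℝ) *
          ∏ b, M (shuffle n S (EE n (Sum.inr (τ.2 b)))) (EE n (Sum.inr b))) := by
    intro S τ
    have hs : Equiv.Perm.sign (shuffle n S * blockPerm τ)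
        = Equiv.Perm.sign (shuffle n S) * (Equiv.Perm.sign τ.1 * Equiv.Perm.sign τ.2) := by
      rw [Equiv.Perm.sign_mul, sign_blockPerm]
    have hp : (∏ k, M ((shuffle n S * blockPerm τ) k) k)
        = (∏ a, M (shuffle n S (EE n (Sum.inl (τ.1 a)))) (EE n (Sum.inl a))) *
          ∏ b, M (shuffle n S (EE n (Sum.inr (τ.2 b)))) (EE n (Sum.inr b)) := by
      rw [← Equiv.prod_comp (EE n) (fun k => M ((shuffle n S * blockPerm τ) k) k)]
      rw [Fintype.prod_sum_type]
      congr 1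
      · refine Finset.prod_congr rfl fun a _ => ?_
        rw [Equiv.Perm.mul_apply, blockPerm_apply_inl]
      · refine Finset.prod_congr rfl fun b _ => ?_
        rw [Equiv.Perm.mul_apply, blockPerm_apply_inr]
    rw [hs, hp]
    push_cast
    ring
  have step1 : (∑ σ : Equiv.Perm (Fin (2*n)), ((Equiv.Perm.sign σ : ℤ) : ℝ) * ∏ i, M (σ i) i)
      = ∑ p ∈ (Finset.powersetCard n (Finset.univ : Finset (Fin (2*n)))) ×ˢ
          (Finset.univ : Finset (Equiv.Perm (Fin n) × Equiv.Perm (Fin n))),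
        ((Equiv.Perm.sign (shuffle n p.1 * blockPerm p.2) : ℤ) : ℝ) *
          ∏ k, M ((shuffle n p.1 * blockPerm p.2) k) k := by
    refine (Finset.sum_nbij (fun p => shuffle n p.1 * blockPerm p.2) ?_ ?_ ?_ ?_).symm
    · intro p _; exact Finset.mem_univ _
    · intro p hp q hq h
      dsimp only at h
      simp only [Finset.coe_product, Set.mem_prod, Finset.mem_coe,
        Finset.mem_powersetCard] at hp hq
      have hSp : p.1.card = n := hp.1.2
      have hSq : q.1.card = n := hq.1.2
      have hSS : p.1 = q.1 := by
        rw [← image_block p.1 hSp p.2, ← image_block q.1 hSq q.2, h]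
      have hbp : blockPerm p.2 = blockPerm q.2 := by
        apply mul_left_cancel (a := shuffle n p.1)
        rw [h, hSS]
      have h1 : p.2.1 = q.2.1 := by
        apply Equiv.ext; intro a
        have := congrArg (fun π : Equiv.Perm (Fin (2*n)) => π (EE n (Sum.inl a))) hbp
        simp only [blockPerm_apply_inl] at this
        exact Sum.inl_injective ((EE n).injective this)
      have h2 : p.2.2 = q.2.2 := by
        apply Equiv.ext; intro b
        have := congrArg (fun π : Equiv.Perm (Fin (2*n)) => π (EE n (Sum.inr b))) hbp
        simp only [blockPerm_apply_inr] at this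
        exact Sum.inr_injective ((EE n).injective this)
      exact Prod.ext hSS (Prod.ext h1 h2)
    · intro σ _
      set S : Finset (Fin (2*n)) :=
        Finset.image (fun a : Fin n => σ (EE n (Sum.inl a))) Finset.univ with hSdef
      have hinj : Function.Injective (fun a : Fin n => σ (EE n (Sum.inl a))) :=
        σ.injective.comp ((EE n).injective.comp Sum.inl_injective)
      have hS : S.card = n := by
        rw [hSdef, Finset.card_image_of_injective _ hinj, Finset.card_univ, Fintype.card_fin]
      set ρ : Equiv.Perm (Fin n ⊕ Fin n) :=
        (EE n).symm.permCongr ((shuffle n S)⁻¹ * σ) with hρdef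
      have hmaps : Set.MapsTo ρ (Set.range Sum.inl) (Set.range Sum.inl) := by
        rintro _ ⟨a, rfl⟩
        have hv : σ (EE n (Sum.inl a)) ∈ S := by
          rw [hSdef]; exact Finset.mem_image_of_mem _ (Finset.mem_univ a)
        have : σ (EE n (Sum.inl a)) ∈ Set.range (S.orderEmbOfFin hS) := by
          rw [Finset.range_orderEmbOfFin]; exact hv
        obtain ⟨a', ha'⟩ := this
        have hsh : shuffle n S (EE n (Sum.inl a')) = σ (EE n (Sum.inl a)) := by
          rw [shuffle_apply_inl hS, ha']
        refine ⟨a', ?_⟩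
        rw [hρdef]
        simp only [Equiv.permCongr_apply, Equiv.symm_symm, Equiv.Perm.mul_apply,
          Equiv.symm_apply_apply]
        rw [← hsh, Equiv.Perm.inv_def, Equiv.symm_apply_apply, Equiv.symm_apply_apply]
      obtain ⟨τ, hτ⟩ := Equiv.Perm.mem_sumCongrHom_range_of_perm_mapsTo_inl hmaps
      refine ⟨(S, τ), ?_, ?_⟩
      · simp only [Finset.coe_product, Set.mem_prod, Finset.mem_coe,
          Finset.mem_powersetCard]
        exact ⟨⟨Finset.subset_univ _, hS⟩, Finset.mem_univ _⟩
      · have hbp : blockPerm τ = (shuffle n S)⁻¹ * σ := by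
          rw [blockPerm]
          have : Equiv.sumCongr τ.1 τ.2 = ρ := by
            rw [← hτ]; rfl
          rw [this, hρdef]
          apply Equiv.ext; intro k
          simp [Equiv.permCongr_apply]
        show shuffle n S * blockPerm τ = σ
        rw [hbp, mul_inv_cancel_left]
    · intro p _
      rfl
  rw [step1, Finset.sum_product]
  refine Finset.sum_congr rfl fun S _ => ?_
  rw [Fintype.sum_prod_type]
  rw [Matrix.det_apply', Matrix.det_apply', Finset.sum_mul_sum, Finset.mul_sum]
  refine Finset.sum_congr rfl fun τ₁ _ => ?_
  rw [Finset.mul_sum]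
  refine Finset.sum_congr rfl fun τ₂ _ => ?_
  have := hterm S (τ₁, τ₂)
  simp only [Matrix.of_apply] at this ⊢
  rw [this]
  ring

end SVP

namespace SVP

lemma shuffle_insert {n : ℕ} (S : Finset (Fin (2*n))) (hS : S.card = n) (i : Fin (2*n))
    (hi : i ∈ S) (ip : Fin (2*n)) (hip : (ip : ℕ) + 1 = (i : ℕ)) (hnp : ip ∉ S) :
    shuffle n (insert ip (S.erase i)) = Equiv.swap ip i * shuffle n S := by
  have hne : ip ≠ i := fun h => by rw [h] at hip; omega
  have hnpos : 0 < n := hS ▸ Finset.card_pos.mpr ⟨i, hi⟩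
  have hS' : (insert ip (S.erase i)).card = n := by
    rw [Finset.card_insert_of_notMem (fun h => hnp (Finset.mem_of_mem_erase h)),
      Finset.card_erase_of_mem hi, hS]
    omega
  have hcompl : (insert ip (S.erase i))ᶜ = (insert i Sᶜ).erase ip := by
    rw [Finset.compl_insert, Finset.compl_erase]
  have hc := card_compl_eq S hS
  have hc' := card_compl_eq _ hS'
  apply Equiv.ext; intro k
  obtain ⟨z, rfl⟩ : ∃ z, EE n z = k := ⟨(EE n).symm k, Equiv.apply_symm_apply _ _⟩
  cases z with
  | inl a =>
    rw [Equiv.Perm.mul_apply, shuffle_apply_inl hS', shuffle_apply_inl hS]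
    have key : (fun a : Fin n => Equiv.swap ip i (S.orderEmbOfFin hS a))
        = (insert ip (S.erase i)).orderEmbOfFin hS' := by
      apply Finset.orderEmbOfFin_unique
      · intro a2
        have hu : S.orderEmbOfFin hS a2 ∈ S := S.orderEmbOfFin_mem hS a2
        by_cases h1 : S.orderEmbOfFin hS a2 = i
        · rw [h1, Equiv.swap_apply_right]
          exact Finset.mem_insert_self _ _
        · rw [Equiv.swap_apply_of_ne_of_ne (fun h2 => hnp (by rw [← h2]; exact hu)) h1]
          exact Finset.mem_insert_of_mem (Finset.mem_erase.mpr ⟨h1, hu⟩)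
      · intro a2 b2 hab
        dsimp only
        have h12 := (S.orderEmbOfFin hS).strictMono hab
        set u := S.orderEmbOfFin hS a2 with hudef
        set v := S.orderEmbOfFin hS b2 with hvdef
        have hu : u ∈ S := S.orderEmbOfFin_mem hS a2
        have hv : v ∈ S := S.orderEmbOfFin_mem hS b2
        have hunp : u ≠ ip := fun h => hnp (h ▸ hu)
        have hvnp : v ≠ ip := fun h => hnp (h ▸ hv)
        rcases eq_or_ne u i with h1 | h1
        · rw [h1, Equiv.swap_apply_right,
            Equiv.swap_apply_of_ne_of_ne hvnp (by rw [← h1]; exact (ne_of_gt h12))]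
          have : (i : ℕ) < (v : ℕ) := h1 ▸ h12
          rw [Fin.lt_def]; omega
        rcases eq_or_ne v i with h2 | h2
        · rw [h2, Equiv.swap_apply_right, Equiv.swap_apply_of_ne_of_ne hunp h1]
          have h3 : (u : ℕ) < (i : ℕ) := h2 ▸ h12
          have h4 : (u : ℕ) ≠ (ip : ℕ) := fun h => hunp (Fin.ext h)
          rw [Fin.lt_def]; omega
        · rw [Equiv.swap_apply_of_ne_of_ne hunp h1, Equiv.swap_apply_of_ne_of_ne hvnp h2]
          exact h12
    exact (congrFun key a).symm
  | inr b =>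
    rw [Equiv.Perm.mul_apply, shuffle_apply_inr hS' hc', shuffle_apply_inr hS hc]
    have key : (fun b : Fin n => Equiv.swap ip i (Sᶜ.orderEmbOfFin hc b))
        = ((insert ip (S.erase i))ᶜ).orderEmbOfFin hc' := by
      apply Finset.orderEmbOfFin_unique
      · intro b2
        have hu : Sᶜ.orderEmbOfFin hc b2 ∈ Sᶜ := Sᶜ.orderEmbOfFin_mem hc b2
        have hui : Sᶜ.orderEmbOfFin hc b2 ≠ i := fun h =>
          (Finset.mem_compl.mp (h ▸ hu)) hi
        rw [hcompl]
        by_cases h1 : Sᶜ.orderEmbOfFin hc b2 = ip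
        · rw [h1, Equiv.swap_apply_left]
          exact Finset.mem_erase.mpr ⟨hne.symm, Finset.mem_insert_self _ _⟩
        · rw [Equiv.swap_apply_of_ne_of_ne h1 hui]
          exact Finset.mem_erase.mpr ⟨h1, Finset.mem_insert_of_mem hu⟩
      · intro a2 b2 hab
        dsimp only
        have h12 := (Sᶜ.orderEmbOfFin hc).strictMono hab
        set u := Sᶜ.orderEmbOfFin hc a2 with hudef
        set v := Sᶜ.orderEmbOfFin hc b2 with hvdef
        have hu : u ∈ Sᶜ := Sᶜ.orderEmbOfFin_mem hc a2
        have hv : v ∈ Sᶜ := Sᶜ.orderEmbOfFin_mem hc b2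
        have hui : u ≠ i := fun h => (Finset.mem_compl.mp (h ▸ hu)) hi
        have hvi : v ≠ i := fun h => (Finset.mem_compl.mp (h ▸ hv)) hi
        rcases eq_or_ne u ip with h1 | h1
        · rw [h1, Equiv.swap_apply_left, Equiv.swap_apply_of_ne_of_ne
            (by rw [← h1]; exact (ne_of_gt h12)) hvi]
          have h3 : (ip : ℕ) < (v : ℕ) := h1 ▸ h12
          have h4 : (v : ℕ) ≠ (i : ℕ) := fun h => hvi (Fin.ext h)
          rw [Fin.lt_def]; omega
        rcases eq_or_ne v ip with h2 | h2
        · rw [h2, Equiv.swap_apply_left, Equiv.swap_apply_of_ne_of_ne h1 hui]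
          have h3 : (u : ℕ) < (ip : ℕ) := h2 ▸ h12
          rw [Fin.lt_def]; omega
        · rw [Equiv.swap_apply_of_ne_of_ne h1 hui, Equiv.swap_apply_of_ne_of_ne h2 hvi]
          exact h12
    exact (congrFun key b).symm

/-- the combined sign attached to a subset. -/
noncomputable def wS (n : ℕ) (S : Finset (Fin (2*n))) : ℝ :=
  ((Equiv.Perm.sign (shuffle n S) : ℤ) : ℝ) * (-1) ^ (∑ i ∈ Sᶜ, (i : ℕ))

lemma w_const {n : ℕ} : ∀ (k : ℕ) (S : Finset (Fin (2*n))), S.card = n →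
    (∑ i ∈ S, (i : ℕ)) = k →
    wS n S = wS n (Finset.univ.filter (fun i : Fin (2*n) => (i : ℕ) < n)) := by
  intro k
  induction k using Nat.strong_induction_on with
  | _ k IH =>
    intro S hS hsum
    by_cases hex : ∃ i ∈ S, (i : ℕ) ≠ 0 ∧
        (⟨(i : ℕ) - 1, Nat.lt_of_le_of_lt (Nat.sub_le _ _) i.isLt⟩ : Fin (2*n)) ∉ S
    · obtain ⟨i, hi, hi0, hnp⟩ := hex
      set ip : Fin (2*n) := ⟨(i : ℕ) - 1, Nat.lt_of_le_of_lt (Nat.sub_le _ _) i.isLt⟩ with hipdef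
      have hip : (ip : ℕ) + 1 = (i : ℕ) := by simp [hipdef]; omega
      have hne : ip ≠ i := fun h => by rw [h] at hip; omega
      have hnpos : 0 < n := hS ▸ Finset.card_pos.mpr ⟨i, hi⟩
      set S' := insert ip (S.erase i) with hS'def
      have hS' : S'.card = n := by
        rw [hS'def, Finset.card_insert_of_notMem (fun h => hnp (Finset.mem_of_mem_erase h)),
          Finset.card_erase_of_mem hi, hS]
        omega
      have e1 : (i : ℕ) + ∑ j ∈ S.erase i, (j : ℕ) = k := by
        rw [Finset.add_sum_erase _ _ hi]; exact hsum
      have e2 : (∑ j ∈ S', (j : ℕ)) = (ip : ℕ) + ∑ j ∈ S.erase i, (j : ℕ) := by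
        rw [hS'def, Finset.sum_insert (fun h => hnp (Finset.mem_of_mem_erase h))]
      have hk1 : 1 ≤ k := by omega
      have hw := IH (k-1) (by omega) S' hS' (by omega)
      rw [← hw]
      unfold wS
      have hcompl : S'ᶜ = (insert i Sᶜ).erase ip := by
        rw [hS'def, Finset.compl_insert, Finset.compl_erase]
      have hinotc : i ∉ Sᶜ := fun h => (Finset.mem_compl.mp h) hi
      have hc1 : (∑ j ∈ insert i Sᶜ, (j : ℕ)) = (i : ℕ) + ∑ j ∈ Sᶜ, (j : ℕ) :=
        Finset.sum_insert hinotc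
      have hc2 : (ip : ℕ) + ∑ j ∈ S'ᶜ, (j : ℕ) = ∑ j ∈ insert i Sᶜ, (j : ℕ) := by
        rw [hcompl]
        exact Finset.add_sum_erase _ _ (Finset.mem_insert_of_mem (Finset.mem_compl.mpr hnp))
      have hcsum : (∑ j ∈ S'ᶜ, (j : ℕ)) = (∑ j ∈ Sᶜ, (j : ℕ)) + 1 := by omega
      rw [hS'def, shuffle_insert S hS i hi ip hip hnp, Equiv.Perm.sign_mul,
        Equiv.Perm.sign_swap hne, ← hS'def, hcsum, pow_succ]
      push_cast
      ring
    · push_neg at hex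
      have down : ∀ (d : ℕ) (i : Fin (2*n)), i ∈ S → ∀ j : Fin (2*n),
          (j : ℕ) + d = (i : ℕ) → j ∈ S := by
        intro d
        induction d with
        | zero =>
          intro i hi j hj
          have : j = i := Fin.ext (by omega)
          rwa [this]
        | succ d IHd =>
          intro i hi j hj
          have hi0 : (i : ℕ) ≠ 0 := by omega
          have hpred := hex i hi hi0
          exact IHd _ hpred j (by simp; omega)
      have hSeq : S = Finset.univ.filter (fun i : Fin (2*n) => (i : ℕ) < n) := by
        ext v
        simp only [Finset.mem_filter, Finset.mem_univ, true_and]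
        constructor
        · intro hv
          by_contra hlt
          push_neg at hlt
          have hsub : Finset.Iic v ⊆ S := by
            intro j hj
            have hj' : (j : ℕ) ≤ (v : ℕ) := Fin.le_def.mp (Finset.mem_Iic.mp hj)
            exact down ((v : ℕ) - (j : ℕ)) v hv j (by omega)
          have hcard := Finset.card_le_card hsub
          rw [Fin.card_Iic, hS] at hcard
          omega
        · intro hv
          by_contra hvS
          have hsub : S ⊆ Finset.Iio v := by
            intro j hj
            rw [Finset.mem_Iio]
            by_contra hlt
            push_neg at hlt
            exact hvS (down ((j : ℕ) - (v : ℕ)) j hj v (by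
              have := Fin.le_def.mp hlt; omega))
          have hcard := Finset.card_le_card hsub
          rw [Fin.card_Iio, hS] at hcard
          omega
      rw [hSeq]

end SVP

namespace SVP

def PqFun (n : ℕ) : Fin n ⊕ Fin n → Fin (2*n) :=
  Sum.elim (fun a => ⟨2 * a.1, by omega⟩)
    (fun a => ⟨2 * a.1 + 1, by omega⟩)

lemma PqFun_bij (n : ℕ) : Function.Bijective (PqFun n) := by
  rw [Fintype.bijective_iff_injective_and_card]
  constructor
  · rintro (a | a) (b | b) h <;>
      simp only [PqFun, Sum.elim_inl, Sum.elim_inr, Fin.mk.injEq] at h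
    · exact congrArg Sum.inl (Fin.ext (by omega))
    · exact absurd h (by omega)
    · exact absurd h (by omega)
    · exact congrArg Sum.inr (Fin.ext (by omega))
  · simp [Fintype.card_sum]; omega

noncomputable def Pq (n : ℕ) : (Fin n ⊕ Fin n) ≃ Fin (2*n) :=
  Equiv.ofBijective _ (PqFun_bij n)

lemma Pq_inl (n : ℕ) (a : Fin n) : ((Pq n (Sum.inl a)) : ℕ) = 2 * a := rfl
lemma Pq_inr (n : ℕ) (a : Fin n) : ((Pq n (Sum.inr a)) : ℕ) = 2 * a + 1 := rfl

end SVP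

open SVP

/-- For `x_0 < x_1 < ⋯ < x_{2n-1}`, the sum over `n`-element subsets `S` of
`Δ(x_S) Δ(x_{Sᶜ})` equals `2^n Δ(x_even) Δ(x_odd)`. -/
theorem sum_vandermonde_pairs_even (n : ℕ) (hn : 0 < n) (x : Fin (2 * n) → ℝ)
    (hx : StrictMono x) :
    (∑ S ∈ Finset.powersetCard n (Finset.univ : Finset (Fin (2 * n))),
        vand x S * vand x Sᶜ)
      = 2 ^ n *
        vand (fun i : Fin n => x ⟨2 * i.1, by have := i.2; omega⟩) Finset.univ *
        vand (fun i : Fin n => x ⟨2 * i.1 + 1, by have := i.2; omega⟩) Finset.univ := by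
  classical
  set M : Matrix (Fin (2*n)) (Fin (2*n)) ℝ :=
    Matrix.of fun i k => if (k : ℕ) < n then x i ^ (k : ℕ)
      else (-1 : ℝ) ^ (i : ℕ) * x i ^ ((k : ℕ) - n) with hM
  -- Laplace side evaluation
  have hdetA : ∀ (S : Finset (Fin (2*n))) (hS : S.card = n),
      (Matrix.of fun a b : Fin n =>
        M (shuffle n S (EE n (Sum.inl a))) (EE n (Sum.inl b))).det = vand x S := by
    intro S hS
    have heq : (Matrix.of fun a b : Fin n =>
        M (shuffle n S (EE n (Sum.inl a))) (EE n (Sum.inl b)))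
        = Matrix.vandermonde (fun a => x (S.orderEmbOfFin hS a)) := by
      ext a b
      simp only [Matrix.of_apply, hM, Matrix.vandermonde_apply]
      rw [shuffle_apply_inl hS]
      rw [if_pos (by rw [EE_inl]; exact b.2)]
      rw [EE_inl]
    rw [heq, Matrix.det_vandermonde, prod_pairs x S hS]
  have hdetB : ∀ (S : Finset (Fin (2*n))) (hS : S.card = n),
      (Matrix.of fun a b : Fin n =>
        M (shuffle n S (EE n (Sum.inr a))) (EE n (Sum.inr b))).det
      = (-1 : ℝ) ^ (∑ i ∈ Sᶜ, (i : ℕ)) * vand x Sᶜ := by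
    intro S hS
    have hc := card_compl_eq S hS
    have heq : (Matrix.of fun a b : Fin n =>
        M (shuffle n S (EE n (Sum.inr a))) (EE n (Sum.inr b)))
        = Matrix.diagonal (fun a => (-1 : ℝ) ^ ((Sᶜ.orderEmbOfFin hc a : Fin (2*n)) : ℕ)) *
          Matrix.vandermonde (fun a => x (Sᶜ.orderEmbOfFin hc a)) := by
      ext a b
      rw [Matrix.diagonal_mul]
      simp only [Matrix.of_apply, hM, Matrix.vandermonde_apply]
      rw [shuffle_apply_inr hS hc]
      rw [if_neg (by rw [EE_inr]; omega)]
      rw [EE_inr, Nat.add_sub_cancel_left]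
    rw [heq, Matrix.det_mul, Matrix.det_diagonal, Matrix.det_vandermonde, prod_pairs x Sᶜ hc]
    congr 1
    rw [Finset.prod_pow_eq_pow_sum]
    congr 1
    refine Finset.sum_bij (fun a _ => Sᶜ.orderEmbOfFin hc a) ?_ ?_ ?_ ?_
    · intro a _; exact Sᶜ.orderEmbOfFin_mem hc a
    · intro a _ b _ h; exact (Sᶜ.orderEmbOfFin hc).injective h
    · intro v hv
      have : v ∈ Set.range (Sᶜ.orderEmbOfFin hc) := by
        rw [Finset.range_orderEmbOfFin]; exact hv
      obtain ⟨a, ha⟩ := this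
      exact ⟨a, Finset.mem_univ a, ha⟩
    · intro a _; rfl
  set S₀ : Finset (Fin (2*n)) := Finset.univ.filter (fun i : Fin (2*n) => (i : ℕ) < n) with hS₀
  set κ : ℝ := wS n S₀ with hκdef
  have h1 : M.det = κ * ∑ S ∈ Finset.powersetCard n (Finset.univ : Finset (Fin (2*n))),
      vand x S * vand x Sᶜ := by
    rw [laplace M, Finset.mul_sum]
    refine Finset.sum_congr rfl fun S hSmem => ?_
    have hS : S.card = n := (Finset.mem_powersetCard.mp hSmem).2
    rw [hdetA S hS, hdetB S hS]
    have hw : wS n S = κ := by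
      rw [hκdef, hS₀]
      exact w_const (∑ i ∈ S, (i : ℕ)) S hS rfl
    rw [← hw]
    unfold wS
    ring
  -- the block-diagonal side
  set N : Matrix (Fin (2*n)) (Fin (2*n)) ℝ :=
    Matrix.of fun i k => if Even (i : ℕ)
      then (if (k : ℕ) < n then x i ^ (k : ℕ) else 0)
      else (if (k : ℕ) < n then 0 else x i ^ ((k : ℕ) - n)) with hN
  set C₁ : Matrix (Fin n ⊕ Fin n) (Fin n ⊕ Fin n) ℝ :=
    Matrix.fromBlocks 1 1 1 (-1) with hC₁
  have hfact : M.submatrix (EE n) (EE n) = N.submatrix (EE n) (EE n) * C₁ := by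
    ext z w
    rw [Matrix.mul_apply]
    rw [Fintype.sum_sum_type]
    cases w with
    | inl b =>
      simp only [hC₁, Matrix.fromBlocks_apply₁₁, Matrix.fromBlocks_apply₂₁, Matrix.one_apply,
        mul_ite, mul_one, mul_zero, Finset.sum_ite_eq', Finset.mem_univ, if_true,
        Matrix.submatrix_apply]
      simp only [hM, hN, Matrix.of_apply, EE_inl, EE_inr]
      by_cases he : Even ((EE n z : Fin (2*n)) : ℕ) <;>
        simp [he, b.2, Nat.add_sub_cancel_left, show ¬ n + (b : ℕ) < n by omega]
    | inr b =>
      simp only [hC₁, Matrix.fromBlocks_apply₁₂, Matrix.fromBlocks_apply₂₂, Matrix.one_apply,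
        Matrix.neg_apply, mul_ite, mul_one, mul_zero, mul_neg, Finset.sum_ite_eq',
        Finset.mem_univ, if_true, Finset.sum_neg_distrib, Matrix.submatrix_apply]
      simp only [hM, hN, Matrix.of_apply, EE_inl, EE_inr]
      by_cases he : Even ((EE n z : Fin (2*n)) : ℕ)
      · rw [Even.neg_one_pow he]
        simp [he, b.2, Nat.add_sub_cancel_left, show ¬ n + (b : ℕ) < n by omega]
      · rw [Odd.neg_one_pow (Nat.not_even_iff_odd.mp he)]
        simp [he, b.2, Nat.add_sub_cancel_left, show ¬ n + (b : ℕ) < n by omega]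
  have hdetC : C₁.det = (-2 : ℝ) ^ n := by
    rw [hC₁, Matrix.det_fromBlocks_one₁₁]
    have : (-1 : Matrix (Fin n) (Fin n) ℝ) - 1 * 1 = (-2 : ℝ) • (1 : Matrix (Fin n) (Fin n) ℝ) := by
      ext i j
      by_cases h : i = j <;> simp [Matrix.one_apply, h] <;> norm_num
    rw [this, Matrix.det_smul]
    simp
  set q : (Fin n ⊕ Fin n) ≃ (Fin n ⊕ Fin n) := (Pq n).trans (EE n).symm with hq
  set ve : Fin n → ℝ := fun i : Fin n => x ⟨2 * i.1, by have := i.2; omega⟩ with hve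
  set vo : Fin n → ℝ := fun i : Fin n => x ⟨2 * i.1 + 1, by have := i.2; omega⟩ with hvo
  have hN2 : (N.submatrix (EE n) (EE n)).submatrix q id
      = Matrix.fromBlocks (Matrix.vandermonde ve) 0 0 (Matrix.vandermonde vo) := by
    ext z w
    have hrow : ∀ z', (EE n) (q z') = Pq n z' := by
      intro z'; rw [hq]; simp
    cases z with
    | inl a =>
      have hz : ((Pq n (Sum.inl a)) : ℕ) = 2 * a := Pq_inl n a
      have heven : Even ((Pq n (Sum.inl a)) : ℕ) := by rw [hz]; exact even_two_mul _
      cases w with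
      | inl b =>
        simp only [Matrix.submatrix_apply, id_eq, hrow, hN, Matrix.of_apply,
          Matrix.fromBlocks_apply₁₁, Matrix.vandermonde_apply, EE_inl]
        rw [if_pos heven, if_pos b.2]
        exact congrArg (· ^ (b : ℕ)) (congrArg x (Fin.ext hz))
      | inr b =>
        simp only [Matrix.submatrix_apply, id_eq, hrow, hN, Matrix.of_apply,
          Matrix.fromBlocks_apply₁₂, Matrix.zero_apply, EE_inr]
        rw [if_pos heven, if_neg (show ¬ n + (b : ℕ) < n by omega)]
    | inr a =>
      have hz : ((Pq n (Sum.inr a)) : ℕ) = 2 * a + 1 := Pq_inr n a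
      have hodd : ¬ Even ((Pq n (Sum.inr a)) : ℕ) := by
        rw [hz]; simp [Nat.even_add_one, Nat.even_mul]
      cases w with
      | inl b =>
        simp only [Matrix.submatrix_apply, id_eq, hrow, hN, Matrix.of_apply,
          Matrix.fromBlocks_apply₂₁, Matrix.zero_apply, EE_inl]
        rw [if_neg hodd, if_pos b.2]
      | inr b =>
        simp only [Matrix.submatrix_apply, id_eq, hrow, hN, Matrix.of_apply,
          Matrix.fromBlocks_apply₂₂, Matrix.vandermonde_apply, EE_inr]
        rw [if_neg hodd, if_neg (show ¬ n + (b : ℕ) < n by omega),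
          Nat.add_sub_cancel_left]
        exact congrArg (· ^ (b : ℕ)) (congrArg x (Fin.ext hz))
  have hperm := Matrix.det_permute q (N.submatrix (EE n) (EE n))
  have hsq : ((Equiv.Perm.sign q : ℤ) : ℝ) = 1 ∨ ((Equiv.Perm.sign q : ℤ) : ℝ) = -1 := by
    rcases Int.units_eq_one_or (Equiv.Perm.sign q) with h | h <;> rw [h] <;> simp
  have hdetN2 : ((N.submatrix (EE n) (EE n)).submatrix q id).det
      = vand ve Finset.univ * vand vo Finset.univ := by
    rw [hN2, Matrix.det_fromBlocks_zero₂₁, Matrix.det_vandermonde, Matrix.det_vandermonde,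
      vand_univ, vand_univ]
  have hdetN : (N.submatrix (EE n) (EE n)).det
      = ((Equiv.Perm.sign q : ℤ) : ℝ) * (vand ve Finset.univ * vand vo Finset.univ) := by
    rw [← hdetN2, hperm]
    rcases hsq with h | h <;> rw [h] <;> ring
  have h2 : M.det = ((Equiv.Perm.sign q : ℤ) : ℝ)
      * (vand ve Finset.univ * vand vo Finset.univ) * (-2 : ℝ) ^ n := by
    rw [← Matrix.det_submatrix_equiv_self (EE n) M, hfact, Matrix.det_mul, hdetC, hdetN]
  -- positivity and conclusion
  have hκpm : κ = 1 ∨ κ = -1 := by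
    rw [hκdef]
    unfold wS
    rcases Int.units_eq_one_or (Equiv.Perm.sign (shuffle n S₀)) with h | h <;>
      rcases Nat.even_or_odd (∑ i ∈ S₀ᶜ, (i : ℕ)) with hp | hp <;>
      rw [h] <;> [rw [Even.neg_one_pow hp]; rw [Odd.neg_one_pow hp];
        rw [Even.neg_one_pow hp]; rw [Odd.neg_one_pow hp]] <;> norm_num
  have hnpm : ((-1 : ℝ)) ^ n = 1 ∨ ((-1 : ℝ)) ^ n = -1 := by
    rcases Nat.even_or_odd n with hp | hp
    · left; exact Even.neg_one_pow hp
    · right; exact Odd.neg_one_pow hp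
  have hvepos : 0 < vand ve Finset.univ := by
    apply vand_pos
    intro a b hab
    apply hx
    rw [Fin.lt_def] at hab ⊢
    simp only [hve]
    omega
  have hvopos : 0 < vand vo Finset.univ := by
    apply vand_pos
    intro a b hab
    apply hx
    rw [Fin.lt_def] at hab ⊢
    simp only [hvo]
    omega
  have hsumpos : 0 < ∑ S ∈ Finset.powersetCard n (Finset.univ : Finset (Fin (2*n))),
      vand x S * vand x Sᶜ := by
    apply Finset.sum_pos
    · intro S _
      exact mul_pos (vand_pos hx S) (vand_pos hx Sᶜ)
    · refine Finset.powersetCard_nonempty.mpr ?_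
      rw [Finset.card_univ, Fintype.card_fin]
      omega
  have hneg2 : ((-2 : ℝ)) ^ n = (-1 : ℝ) ^ n * 2 ^ n := by
    rw [show (-2 : ℝ) = -1 * 2 by norm_num, mul_pow]
  have hT : 0 < 2 ^ n * (vand ve Finset.univ * vand vo Finset.univ) :=
    mul_pos (pow_pos (by norm_num) n) (mul_pos hvepos hvopos)
  set c : ℝ := κ * ((Equiv.Perm.sign q : ℤ) : ℝ) * (-1 : ℝ) ^ n with hcdef
  have hSig : (∑ S ∈ Finset.powersetCard n (Finset.univ : Finset (Fin (2*n))),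
      vand x S * vand x Sᶜ)
      = c * (2 ^ n * (vand ve Finset.univ * vand vo Finset.univ)) := by
    have hκ2 : κ * κ = 1 := by rcases hκpm with h | h <;> rw [h] <;> norm_num
    have hMd := h1
    rw [h2] at hMd
    calc (∑ S ∈ Finset.powersetCard n (Finset.univ : Finset (Fin (2*n))),
        vand x S * vand x Sᶜ)
        = κ * (κ * ∑ S ∈ Finset.powersetCard n (Finset.univ : Finset (Fin (2*n))),
            vand x S * vand x Sᶜ) := by rw [← mul_assoc, hκ2, one_mul]
      _ = κ * (((Equiv.Perm.sign q : ℤ) : ℝ)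
            * (vand ve Finset.univ * vand vo Finset.univ) * (-2 : ℝ) ^ n) := by rw [← hMd]
      _ = _ := by rw [hneg2, hcdef]; ring
  have hcpm : c = 1 ∨ c = -1 := by
    rw [hcdef]
    rcases hκpm with h | h <;> rcases hsq with h' | h' <;> rcases hnpm with h'' | h'' <;>
      rw [h, h', h''] <;> norm_num
  rcases hcpm with hc | hc
  · rw [hc, one_mul] at hSig
    rw [hSig]
    ring
  · exfalso
    rw [hc] at hSig
    rw [hSig] at hsumpos
    linarith
end

section
/- For every integer n > 0 and real numbers x_0 < x_1 < ... < x_{2n}, the sum over all (n+1)-element subsets S of {0,1,...,2n} of Δ(x_S)·Δ(x_{S^c}) equals 2^n · Δ(x_0,x_2,...,x_{2n}) · Δ(x_1,x_3,...,x_{2n-1}). -/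
open Finset Polynomial

section vg
variable {ι κ : Type*} [LinearOrder ι] [LinearOrder κ]

/-- generalized vandermonde-ish product -/
noncomputable def vg (x : ι → ℝ) (S : Finset ι) : ℝ :=
  ∏ p ∈ (S ×ˢ S).filter (fun p => p.1 < p.2), (x p.2 - x p.1)

lemma vg_congr {x y : ι → ℝ} {S : Finset ι} (h : ∀ i ∈ S, x i = y i) :
    vg x S = vg y S := by
  refine Finset.prod_congr rfl ?_
  rintro ⟨i, j⟩ hp
  simp only [mem_filter, mem_product] at hp
  rw [h _ hp.1.1, h _ hp.1.2]

@[simp] lemma vg_empty (x : ι → ℝ) : vg x (∅ : Finset ι) = 1 := by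
  simp [vg]

@[simp] lemma vg_singleton (x : ι → ℝ) (a : ι) : vg x ({a} : Finset ι) = 1 := by
  have : (({a} : Finset ι) ×ˢ {a}).filter (fun p => p.1 < p.2) = ∅ := by
    ext ⟨i, j⟩
    simp only [mem_filter, mem_product, mem_singleton, notMem_empty, iff_false]
    rintro ⟨⟨rfl, rfl⟩, h⟩
    exact lt_irrefl _ h
  rw [vg, this, Finset.prod_empty]

lemma vg_eq_zero {x : ι → ℝ} {S : Finset ι} {a b : ι} (ha : a ∈ S) (hb : b ∈ S)
    (hab : a < b) (hx : x a = x b) : vg x S = 0 := by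
  refine Finset.prod_eq_zero (i := (a, b)) ?_ ?_
  · simp [mem_filter, mem_product, ha, hb, hab]
  · simp [hx]

lemma vg_insert {x : ι → ℝ} {S : Finset ι} {a : ι} (ha : a ∉ S) :
    vg x (insert a S) =
      ((∏ i ∈ S.filter (· < a), (x a - x i)) * ∏ i ∈ S.filter (a < ·), (x i - x a)) *
        vg x S := by
  classical
  have hset : ((insert a S) ×ˢ (insert a S)).filter (fun p => p.1 < p.2) =
      ((S.filter (· < a)).image (fun i => (i, a)) ∪ (S.filter (a < ·)).image (fun j => (a, j)))
        ∪ (S ×ˢ S).filter (fun p => p.1 < p.2) := by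
    ext ⟨i, j⟩
    simp only [mem_filter, mem_product, mem_insert, mem_union, mem_image, Prod.mk.injEq]
    constructor
    · rintro ⟨⟨hi | hi, hj | hj⟩, hlt⟩
      · exact absurd (hi ▸ hj ▸ hlt) (lt_irrefl _)
      · subst hi; exact Or.inl (Or.inr ⟨j, ⟨hj, hlt⟩, rfl, rfl⟩)
      · subst hj; exact Or.inl (Or.inl ⟨i, ⟨hi, hlt⟩, rfl, rfl⟩)
      · exact Or.inr ⟨⟨hi, hj⟩, hlt⟩
    · rintro ((⟨k, ⟨hk, hka⟩, rfl, rfl⟩ | ⟨k, ⟨hk, hka⟩, rfl, rfl⟩) | ⟨⟨hi, hj⟩, hlt⟩)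
      · exact ⟨⟨Or.inr hk, Or.inl rfl⟩, hka⟩
      · exact ⟨⟨Or.inl rfl, Or.inr hk⟩, hka⟩
      · exact ⟨⟨Or.inr hi, Or.inr hj⟩, hlt⟩
  have hd1 : Disjoint ((S.filter (· < a)).image (fun i => (i, a)))
      ((S.filter (a < ·)).image (fun j => (a, j))) := by
    rw [Finset.disjoint_left]
    rintro ⟨i, j⟩ h1 h2
    simp only [mem_image, Prod.mk.injEq, mem_filter] at h1 h2
    obtain ⟨k, ⟨hk, hka⟩, rfl, rfl⟩ := h1
    obtain ⟨l, ⟨hl, hla⟩, h, rfl⟩ := h2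
    subst h; exact ha hk
  have hd2 : Disjoint
      ((S.filter (· < a)).image (fun i => (i, a)) ∪ (S.filter (a < ·)).image (fun j => (a, j)))
      ((S ×ˢ S).filter (fun p => p.1 < p.2)) := by
    rw [Finset.disjoint_left]
    rintro ⟨i, j⟩ h1 h2
    simp only [mem_union, mem_image, Prod.mk.injEq, mem_filter, mem_product] at h1 h2
    rcases h1 with ⟨k, hk, rfl, rfl⟩ | ⟨k, hk, rfl, rfl⟩
    · exact ha h2.1.2
    · exact ha h2.1.1
  rw [vg, hset, Finset.prod_union hd2, Finset.prod_union hd1,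
    Finset.prod_image (fun y _ z _ h => (Prod.mk.injEq _ _ _ _ ▸ h).1),
    Finset.prod_image (fun y _ z _ h => (Prod.mk.injEq _ _ _ _ ▸ h).2)]
  rw [vg]

lemma vg_insert_max {x : ι → ℝ} {S : Finset ι} {a : ι} (ha : a ∉ S)
    (hmax : ∀ i ∈ S, i < a) :
    vg x (insert a S) = (∏ i ∈ S, (x a - x i)) * vg x S := by
  rw [vg_insert ha]
  have h1 : S.filter (· < a) = S := Finset.filter_eq_self.2 hmax
  have h2 : S.filter (a < ·) = ∅ := by
    refine Finset.filter_eq_empty_iff.2 ?_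
    intro i hi
    exact not_lt_of_gt (hmax i hi)
  rw [h1, h2]
  simp

lemma vg_map (e : ι ↪ κ) (he : StrictMono e) (x : κ → ℝ) (S : Finset ι) :
    vg x (S.map e) = vg (x ∘ e) S := by
  rw [vg, vg]
  refine (Finset.prod_nbij (fun p => (e p.1, e p.2)) ?_ ?_ ?_ ?_).symm
  · rintro ⟨i, j⟩ hp
    simp only [mem_filter, mem_product] at hp ⊢
    exact ⟨⟨mem_map_of_mem e hp.1.1, mem_map_of_mem e hp.1.2⟩, he hp.2⟩
  · rintro ⟨i, j⟩ - ⟨i', j'⟩ - h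
    simp only [Prod.mk.injEq] at h
    exact Prod.ext (e.injective h.1) (e.injective h.2)
  · rintro ⟨i, j⟩ hp
    simp only [Finset.coe_filter, Set.mem_setOf_eq, mem_product, mem_map] at hp
    obtain ⟨⟨⟨i', hi', rfl⟩, ⟨j', hj', rfl⟩⟩, hlt⟩ := hp
    refine ⟨(i', j'), ?_, rfl⟩
    simp only [Finset.coe_filter, Set.mem_setOf_eq, mem_product]
    exact ⟨⟨hi', hj'⟩, he.lt_iff_lt.1 hlt⟩
  · rintro ⟨i, j⟩ -
    rfl

end vg

lemma prod_neg_one_pow (s : Finset ℕ) (f : ℕ → ℝ) :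
    ∏ i ∈ s, -f i = (-1 : ℝ) ^ s.card * ∏ i ∈ s, f i := by
  rw [← Finset.prod_const, ← Finset.prod_mul_distrib]
  simp

lemma filter_not_lt (T : Finset ℕ) (a : ℕ) (ha : a ∉ T) :
    T.filter (fun i => ¬ i < a) = T.filter (a < ·) := by
  refine Finset.filter_congr ?_
  intro i hi
  have : i ≠ a := fun h => ha (h ▸ hi)
  omega

/-- split an insert-max product along position `a` and pull out signs -/
lemma vg_insert_max_sign {x : ℕ → ℝ} {T : Finset ℕ} {a b : ℕ} (hab : a < b)
    (hx : x a = x b) (haT : a ∉ T) (hbT : b ∉ T) (hmax : ∀ i ∈ T, i < b) :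
    vg x (insert b T) =
      (-1) ^ (T.filter (a < ·)).card *
        (((∏ i ∈ T.filter (· < a), (x a - x i)) * ∏ i ∈ T.filter (a < ·), (x i - x a)) *
          vg x T) := by
  rw [vg_insert_max hbT hmax]
  have h1 : ∏ i ∈ T, (x b - x i) = ∏ i ∈ T, (x a - x i) := by
    rw [← hx]
  rw [h1, ← Finset.prod_filter_mul_prod_filter_not T (· < a), filter_not_lt T a haT]
  have h2 : ∏ i ∈ T.filter (a < ·), (x a - x i)
      = (-1 : ℝ) ^ (T.filter (a < ·)).card * ∏ i ∈ T.filter (a < ·), (x i - x a) := by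
    rw [← prod_neg_one_pow]
    exact Finset.prod_congr rfl (fun i _ => by ring)
  rw [h2]; ring

lemma swap_term {x : ℕ → ℝ} {a b : ℕ} (hab : a < b) (hpar : a % 2 = b % 2)
    (hx : x a = x b) {S : Finset ℕ} (hS : S ⊆ range (b + 1)) (haS : a ∈ S) (hbS : b ∉ S) :
    vg x (insert b (S.erase a)) * vg x (range (b + 1) \ insert b (S.erase a))
      = -(vg x S * vg x (range (b + 1) \ S)) := by
  classical
  set T := S.erase a with hT
  set U := (range (b + 1) \ S).erase b with hU
  have haT : a ∉ T := Finset.notMem_erase _ _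
  have hbT : b ∉ T := fun h => hbS (Finset.mem_of_mem_erase h)
  have hbU : b ∉ U := Finset.notMem_erase _ _
  have haU : a ∉ U := by
    intro h
    exact (Finset.mem_sdiff.1 (Finset.mem_of_mem_erase h)).2 haS
  have hmaxT : ∀ i ∈ T, i < b := by
    intro i hi
    have h1 : i < b + 1 := Finset.mem_range.1 (hS (Finset.mem_of_mem_erase hi))
    have h2 : i ≠ b := fun h => hbT (h ▸ hi)
    omega
  have hmaxU : ∀ i ∈ U, i < b := by
    intro i hi
    have h1 := Finset.mem_range.1 (Finset.mem_sdiff.1 (Finset.mem_of_mem_erase hi)).1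
    have h2 : i ≠ b := Finset.ne_of_mem_erase hi
    omega
  have hSeq : S = insert a T := (Finset.insert_erase haS).symm
  have hCeq : range (b + 1) \ S = insert b U := by
    rw [hU]
    refine (Finset.insert_erase ?_).symm
    exact Finset.mem_sdiff.2 ⟨Finset.mem_range.2 (by omega), hbS⟩
  have hC'eq : range (b + 1) \ insert b T = insert a U := by
    have h1 : a < b + 1 := by omega
    have h2 : a ≠ b := by omega
    ext i
    simp only [Finset.mem_sdiff, Finset.mem_range, Finset.mem_insert, hU, hT,
      Finset.mem_erase, not_or]
    constructor
    · rintro ⟨hi, hib, h⟩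
      by_cases hia : i = a
      · exact Or.inl hia
      · exact Or.inr ⟨hib, hi, fun hiS => h ⟨hia, hiS⟩⟩
    · rintro (h | ⟨hib, hi, hiS⟩)
      · subst h
        exact ⟨h1, h2, fun h => h.1 rfl⟩
      · exact ⟨hi, hib, fun h => hiS h.2⟩
  -- products
  set A := ∏ i ∈ T.filter (· < a), (x a - x i) with hA
  set B := ∏ i ∈ T.filter (a < ·), (x i - x a) with hB
  set A' := ∏ i ∈ U.filter (· < a), (x a - x i) with hA'
  set B' := ∏ i ∈ U.filter (a < ·), (x i - x a) with hB'
  set α := (T.filter (a < ·)).card with hα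
  set β := (U.filter (a < ·)).card with hβ
  have e1 : vg x S = (A * B) * vg x T := by rw [hSeq, vg_insert haT]
  have e2 : vg x (insert b T) = (-1) ^ α * ((A * B) * vg x T) :=
    vg_insert_max_sign hab hx haT hbT hmaxT
  have e3 : vg x (range (b + 1) \ S) = (-1) ^ β * ((A' * B') * vg x U) := by
    rw [hCeq]
    exact vg_insert_max_sign hab hx haU hbU hmaxU
  have e4 : vg x (range (b + 1) \ insert b T) = (A' * B') * vg x U := by
    rw [hC'eq, vg_insert haU]
  -- sign count
  have hdisj : Disjoint (T.filter (a < ·)) (U.filter (a < ·)) := by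
    rw [Finset.disjoint_left]
    intro i h1 h2
    have h1' := Finset.mem_of_mem_erase (Finset.mem_filter.1 h1).1
    have h2' := (Finset.mem_sdiff.1 (Finset.mem_of_mem_erase (Finset.mem_filter.1 h2).1)).2
    exact h2' h1'
  have hunion : T.filter (a < ·) ∪ U.filter (a < ·) = Finset.Ioo a b := by
    ext i
    simp only [Finset.mem_union, Finset.mem_filter, Finset.mem_Ioo]
    constructor
    · rintro (⟨hi, hai⟩ | ⟨hi, hai⟩)
      · exact ⟨hai, hmaxT i hi⟩
      · exact ⟨hai, hmaxU i hi⟩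
    · rintro ⟨hai, hib⟩
      by_cases hiS : i ∈ S
      · refine Or.inl ⟨?_, hai⟩
        exact Finset.mem_erase.2 ⟨by omega, hiS⟩
      · refine Or.inr ⟨?_, hai⟩
        refine Finset.mem_erase.2 ⟨by omega, Finset.mem_sdiff.2 ⟨Finset.mem_range.2 (by omega), hiS⟩⟩
  have hcard : α + β = b - a - 1 := by
    rw [hα, hβ, ← Finset.card_union_of_disjoint hdisj, hunion, Nat.card_Ioo]
  have hodd : Odd (α + β) := by
    rw [Nat.odd_iff, hcard]
    omega
  have hsign : ((-1 : ℝ) ^ α) * ((-1 : ℝ) ^ β) = -1 := by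
    rw [← pow_add]
    exact Odd.neg_one_pow hodd
  have hsq : ((-1 : ℝ) ^ β) * ((-1 : ℝ) ^ β) = 1 := by
    rw [← pow_add]
    exact Even.neg_one_pow ⟨β, rfl⟩
  have hopp : ((-1 : ℝ) ^ α) = -((-1 : ℝ) ^ β) := by
    linear_combination ((-1 : ℝ) ^ β) * hsign - ((-1 : ℝ) ^ α) * hsq
  rw [e2, e4, e1, e3, hopp]
  ring

lemma sum_zero {x : ℕ → ℝ} {a b : ℕ} (k : ℕ) (hab : a < b) (hpar : a % 2 = b % 2)
    (hx : x a = x b) :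
    ∑ S ∈ powersetCard k (range (b + 1)), vg x S * vg x (range (b + 1) \ S) = 0 := by
  classical
  have hbr : b ∈ range (b + 1) := Finset.mem_range.2 (by omega)
  have har : a ∈ range (b + 1) := Finset.mem_range.2 (by omega)
  refine Finset.sum_involution
    (fun S _ => if a ∈ S then (if b ∈ S then S else insert b (S.erase a))
      else (if b ∈ S then insert a (S.erase b) else S)) ?_ ?_ ?_ ?_
  · -- f S + f (g S) = 0
    intro S hS
    rw [Finset.mem_powersetCard] at hS
    by_cases haS : a ∈ S <;> by_cases hbS : b ∈ S <;>
      simp only [haS, hbS, if_true, if_false]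
    · have h0 : vg x S = 0 := vg_eq_zero haS hbS hab hx
      rw [h0]; ring
    · rw [swap_term hab hpar hx hS.1 haS hbS]; ring
    · -- b ∈ S, a ∉ S
      set S' := insert a (S.erase b) with hS'
      have haS' : a ∈ S' := Finset.mem_insert_self _ _
      have hbS' : b ∉ S' := by
        intro h
        rcases Finset.mem_insert.1 h with h | h
        · omega
        · exact (Finset.mem_erase.1 h).1 rfl
      have hsub' : S' ⊆ range (b + 1) := by
        intro i hi
        rcases Finset.mem_insert.1 hi with rfl | hi
        · exact har
        · exact hS.1 (Finset.mem_of_mem_erase hi)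
      have key := swap_term hab hpar hx hsub' haS' hbS'
      have hrec : insert b (S'.erase a) = S := by
        rw [hS', Finset.erase_insert (fun h => haS (Finset.mem_of_mem_erase h)),
          Finset.insert_erase hbS]
      rw [hrec] at key
      rw [key]; ring
    · have h0 : vg x (range (b + 1) \ S) = 0 :=
        vg_eq_zero (Finset.mem_sdiff.2 ⟨har, haS⟩) (Finset.mem_sdiff.2 ⟨hbr, hbS⟩) hab hx
      rw [h0]; ring
  · -- g_ne
    intro S hS hfS
    by_cases haS : a ∈ S <;> by_cases hbS : b ∈ S <;>
      simp only [haS, hbS, if_true, if_false]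
    · intro h; exact hfS (by rw [vg_eq_zero haS hbS hab hx]; ring)
    · intro h; exact hbS (h ▸ Finset.mem_insert_self b _)
    · intro h; exact haS (h ▸ Finset.mem_insert_self a _)
    · intro h
      refine hfS ?_
      rw [vg_eq_zero (S := range (b + 1) \ S) (Finset.mem_sdiff.2 ⟨har, haS⟩)
        (Finset.mem_sdiff.2 ⟨hbr, hbS⟩) hab hx]
      ring
  · -- g_mem
    intro S hS
    rw [Finset.mem_powersetCard] at hS ⊢
    by_cases haS : a ∈ S <;> by_cases hbS : b ∈ S <;>
      simp only [haS, hbS, if_true, if_false]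
    · exact hS
    · constructor
      · intro i hi
        rcases Finset.mem_insert.1 hi with rfl | hi
        · exact hbr
        · exact hS.1 (Finset.mem_of_mem_erase hi)
      · rw [Finset.card_insert_of_notMem (fun h => hbS (Finset.mem_of_mem_erase h)),
          Finset.card_erase_of_mem haS]
        have : 1 ≤ S.card := Finset.card_pos.2 ⟨a, haS⟩
        omega
    · constructor
      · intro i hi
        rcases Finset.mem_insert.1 hi with rfl | hi
        · exact har
        · exact hS.1 (Finset.mem_of_mem_erase hi)
      · rw [Finset.card_insert_of_notMem (fun h => haS (Finset.mem_of_mem_erase h)),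
          Finset.card_erase_of_mem hbS]
        have : 1 ≤ S.card := Finset.card_pos.2 ⟨b, hbS⟩
        omega
    · exact hS
  · -- involution
    intro S hS
    by_cases haS : a ∈ S <;> by_cases hbS : b ∈ S <;>
      simp only [haS, hbS, if_true, if_false]
    · have h1 : a ∉ insert b (S.erase a) := by
        intro h
        rcases Finset.mem_insert.1 h with h | h
        · omega
        · exact (Finset.mem_erase.1 h).1 rfl
      have h2 : b ∈ insert b (S.erase a) := Finset.mem_insert_self _ _
      rw [if_neg h1, if_pos h2,
        Finset.erase_insert (fun h => hbS (Finset.mem_of_mem_erase h)),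
        Finset.insert_erase haS]
    · have h1 : a ∈ insert a (S.erase b) := Finset.mem_insert_self _ _
      have h2 : b ∉ insert a (S.erase b) := by
        intro h
        rcases Finset.mem_insert.1 h with h | h
        · omega
        · exact (Finset.mem_erase.1 h).1 rfl
      rw [if_pos h1, if_neg h2,
        Finset.erase_insert (fun h => haS (Finset.mem_of_mem_erase h)),
        Finset.insert_erase hbS]

/-- polynomial in the value at position `b`. -/
noncomputable def Pv (x : ℕ → ℝ) (b : ℕ) (S : Finset ℕ) : ℝ[X] :=
  if b ∈ S then C (vg x (S.erase b)) * ∏ i ∈ S.erase b, (X - C (x i)) else C (vg x S)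

lemma monicProd_monic (x : ℕ → ℝ) (T : Finset ℕ) :
    (∏ i ∈ T, (X - C (x i))).Monic :=
  monic_prod_of_monic _ _ (fun i _ => monic_X_sub_C _)

lemma monicProd_natDegree (x : ℕ → ℝ) (T : Finset ℕ) :
    (∏ i ∈ T, (X - C (x i))).natDegree = T.card := by
  rw [natDegree_prod_of_monic _ _ (fun i _ => monic_X_sub_C _)]
  simp [natDegree_X_sub_C]

lemma Pv_eval (x : ℕ → ℝ) (b : ℕ) (S : Finset ℕ) (hS : S ⊆ range (b + 1)) (y : ℝ) :
    (Pv x b S).eval y = vg (Function.update x b y) S := by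
  have hupd : ∀ i, i ≠ b → Function.update x b y i = x i := fun i hi =>
    Function.update_of_ne hi _ _
  by_cases hb : b ∈ S
  · rw [Pv, if_pos hb]
    have hmax : ∀ i ∈ S.erase b, i < b := by
      intro i hi
      have h1 := Finset.mem_range.1 (hS (Finset.mem_of_mem_erase hi))
      have h2 := (Finset.mem_erase.1 hi).1
      omega
    have hV : vg (Function.update x b y) S
        = (∏ i ∈ S.erase b, (y - x i)) * vg x (S.erase b) := by
      conv_lhs => rw [← Finset.insert_erase hb]
      rw [vg_insert_max (Finset.notMem_erase _ _) hmax]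
      congr 1
      · refine Finset.prod_congr rfl fun i hi => ?_
        rw [Function.update_self, hupd i (Finset.mem_erase.1 hi).1]
      · exact vg_congr fun i hi => hupd i (Finset.mem_erase.1 hi).1
    rw [hV, eval_mul, eval_C, eval_prod]
    simp only [eval_sub, eval_X, eval_C]
    ring
  · rw [Pv, if_neg hb, eval_C]
    exact vg_congr fun i hi => (hupd i (fun h => hb (h ▸ hi))).symm

lemma Pv_notmem_eq {x : ℕ → ℝ} {b : ℕ} {S : Finset ℕ} (hb : b ∉ S) :
    Pv x b S = C (vg x S) := by
  rw [Pv, if_neg hb]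

lemma Pv_natDegree_notmem {x : ℕ → ℝ} {b : ℕ} {S : Finset ℕ} (hb : b ∉ S) :
    (Pv x b S).natDegree = 0 := by
  rw [Pv, if_neg hb]; exact natDegree_C _

lemma Pv_natDegree_le {x : ℕ → ℝ} {b : ℕ} {S : Finset ℕ} (hb : b ∈ S) :
    (Pv x b S).natDegree ≤ S.card - 1 := by
  rw [Pv, if_pos hb]
  refine le_trans (natDegree_C_mul_le _ _) ?_
  rw [monicProd_natDegree, Finset.card_erase_of_mem hb]

lemma Pv_coeff_top {x : ℕ → ℝ} {b : ℕ} {S : Finset ℕ} (hb : b ∈ S) :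
    (Pv x b S).coeff (S.card - 1) = vg x (S.erase b) := by
  rw [Pv, if_pos hb, coeff_C_mul]
  have h1 : (∏ i ∈ S.erase b, (X - C (x i))).natDegree = S.card - 1 := by
    rw [monicProd_natDegree, Finset.card_erase_of_mem hb]
  rw [← h1, Monic.coeff_natDegree (monicProd_monic x _)]
  ring

-- parity filter lemmas
lemma Ev_eq (M : ℕ) : (range M).filter (fun i => i % 2 = 0)
    = (range ((M + 1) / 2)).image (fun i => 2 * i) := by
  ext i
  simp only [Finset.mem_filter, Finset.mem_range, Finset.mem_image]
  constructor
  · rintro ⟨h1, h2⟩; exact ⟨i / 2, by omega, by omega⟩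
  · rintro ⟨j, hj, rfl⟩; omega

lemma Od_eq (M : ℕ) : (range M).filter (fun i => i % 2 = 1)
    = (range (M / 2)).image (fun i => 2 * i + 1) := by
  ext i
  simp only [Finset.mem_filter, Finset.mem_range, Finset.mem_image]
  constructor
  · rintro ⟨h1, h2⟩; exact ⟨i / 2, by omega, by omega⟩
  · rintro ⟨j, hj, rfl⟩; omega

lemma Ev_card (M : ℕ) : ((range M).filter (fun i => i % 2 = 0)).card = (M + 1) / 2 := by
  rw [Ev_eq, Finset.card_image_of_injective _ (fun i j h => by omega), Finset.card_range]

lemma Od_card (M : ℕ) : ((range M).filter (fun i => i % 2 = 1)).card = M / 2 := by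
  rw [Od_eq, Finset.card_image_of_injective _ (fun i j h => by omega), Finset.card_range]

lemma Ev_succ_even {m : ℕ} (hm : m % 2 = 0) :
    ((range (m + 1)).filter (fun i => i % 2 = 0)).erase m
      = (range m).filter (fun i => i % 2 = 0) := by
  ext i
  simp only [Finset.mem_erase, Finset.mem_filter, Finset.mem_range]
  omega

lemma Od_succ_even {m : ℕ} (hm : m % 2 = 0) :
    (range (m + 1)).filter (fun i => i % 2 = 1) = (range m).filter (fun i => i % 2 = 1) := by
  ext i
  simp only [Finset.mem_filter, Finset.mem_range]
  omega

lemma Od_succ_odd {m : ℕ} (hm : m % 2 = 1) :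
    ((range (m + 1)).filter (fun i => i % 2 = 1)).erase m
      = (range m).filter (fun i => i % 2 = 1) := by
  ext i
  simp only [Finset.mem_erase, Finset.mem_filter, Finset.mem_range]
  omega

lemma Ev_succ_odd {m : ℕ} (hm : m % 2 = 1) :
    (range (m + 1)).filter (fun i => i % 2 = 0) = (range m).filter (fun i => i % 2 = 0) := by
  ext i
  simp only [Finset.mem_filter, Finset.mem_range]
  omega

lemma sdiff_of_mem_top {m : ℕ} {S : Finset ℕ} (hS : S ⊆ range (m + 1)) (hm : m ∈ S) :
    range (m + 1) \ S = range m \ S.erase m := by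
  ext i
  simp only [Finset.mem_sdiff, Finset.mem_range, Finset.mem_erase]
  constructor
  · rintro ⟨h1, h2⟩
    have : i ≠ m := fun h => h2 (h ▸ hm)
    exact ⟨by omega, fun h => h2 h.2⟩
  · rintro ⟨h1, h2⟩
    refine ⟨by omega, fun h => h2 ⟨by omega, h⟩⟩

lemma sdiff_of_not_mem_top {m : ℕ} {S : Finset ℕ} (hS : S ⊆ range (m + 1)) (hm : m ∉ S) :
    (range (m + 1) \ S).erase m = range m \ S := by
  ext i
  simp only [Finset.mem_erase, Finset.mem_sdiff, Finset.mem_range]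
  constructor
  · rintro ⟨h1, h2, h3⟩; exact ⟨by omega, h3⟩
  · rintro ⟨h1, h2⟩; exact ⟨by omega, by omega, h2⟩

lemma subset_range_of_mem_pc {k M : ℕ} {S : Finset ℕ} (h : S ∈ powersetCard k (range M)) :
    S ⊆ range M := (Finset.mem_powersetCard.1 h).1

lemma card_of_mem_pc {k M : ℕ} {S : Finset ℕ} (h : S ∈ powersetCard k (range M)) :
    S.card = k := (Finset.mem_powersetCard.1 h).2

lemma sum_erase_bij (x : ℕ → ℝ) (m k : ℕ) (hk : 1 ≤ k) :
    ∑ S ∈ (powersetCard k (range (m + 1))).filter (fun S => m ∈ S),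
        vg x (S.erase m) * vg x (range (m + 1) \ S)
      = ∑ T ∈ powersetCard (k - 1) (range m), vg x T * vg x (range m \ T) := by
  refine Finset.sum_nbij' (fun S => S.erase m) (fun T => insert m T) ?_ ?_ ?_ ?_ ?_
  · intro S hS
    rw [Finset.mem_filter] at hS
    obtain ⟨hS, hm⟩ := hS
    rw [Finset.mem_powersetCard] at hS ⊢
    refine ⟨?_, by rw [Finset.card_erase_of_mem hm, hS.2]⟩
    intro i hi
    have h1 := Finset.mem_range.1 (hS.1 (Finset.mem_of_mem_erase hi))
    have h2 := (Finset.mem_erase.1 hi).1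
    exact Finset.mem_range.2 (by omega)
  · intro T hT
    rw [Finset.mem_powersetCard] at hT
    have hmT : m ∉ T := fun h => by have := Finset.mem_range.1 (hT.1 h); omega
    rw [Finset.mem_filter, Finset.mem_powersetCard]
    refine ⟨⟨?_, ?_⟩, Finset.mem_insert_self _ _⟩
    · intro i hi
      rcases Finset.mem_insert.1 hi with rfl | hi
      · exact Finset.mem_range.2 (by omega)
      · have := Finset.mem_range.1 (hT.1 hi); exact Finset.mem_range.2 (by omega)
    · rw [Finset.card_insert_of_notMem hmT, hT.2]; omega
  · intro S hS
    rw [Finset.mem_filter] at hS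
    exact Finset.insert_erase hS.2
  · intro T hT
    rw [Finset.mem_powersetCard] at hT
    have hmT : m ∉ T := fun h => by have := Finset.mem_range.1 (hT.1 h); omega
    exact Finset.erase_insert hmT
  · intro S hS
    rw [Finset.mem_filter] at hS
    rw [sdiff_of_mem_top (subset_range_of_mem_pc hS.1) hS.2]

lemma sum_noterase_bij (x : ℕ → ℝ) (m k : ℕ) :
    ∑ S ∈ (powersetCard k (range (m + 1))).filter (fun S => m ∉ S),
        vg x S * vg x ((range (m + 1) \ S).erase m)
      = ∑ T ∈ powersetCard k (range m), vg x T * vg x (range m \ T) := by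
  refine Finset.sum_nbij' (fun S => S) (fun T => T) ?_ ?_ ?_ ?_ ?_
  · intro S hS
    rw [Finset.mem_filter] at hS
    obtain ⟨hS, hm⟩ := hS
    rw [Finset.mem_powersetCard] at hS ⊢
    refine ⟨?_, hS.2⟩
    intro i hi
    have h1 := Finset.mem_range.1 (hS.1 hi)
    have h2 : i ≠ m := fun h => hm (h ▸ hi)
    exact Finset.mem_range.2 (by omega)
  · intro T hT
    rw [Finset.mem_powersetCard] at hT
    have hmT : m ∉ T := fun h => by have := Finset.mem_range.1 (hT.1 h); omega
    rw [Finset.mem_filter, Finset.mem_powersetCard]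
    exact ⟨⟨fun i hi => Finset.mem_range.2 (by have := Finset.mem_range.1 (hT.1 hi); omega),
      hT.2⟩, hmT⟩
  · intro S _; rfl
  · intro T _; rfl
  · intro S hS
    rw [Finset.mem_filter] at hS
    rw [sdiff_of_not_mem_top (subset_range_of_mem_pc hS.1) hS.2]

lemma sum_compl_symm (x : ℕ → ℝ) (M j : ℕ) (hj : j ≤ M) :
    ∑ S ∈ powersetCard j (range M), vg x S * vg x (range M \ S)
      = ∑ S ∈ powersetCard (M - j) (range M), vg x S * vg x (range M \ S) := by
  refine Finset.sum_nbij' (fun S => range M \ S) (fun S => range M \ S) ?_ ?_ ?_ ?_ ?_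
  · intro S hS
    rw [Finset.mem_powersetCard] at hS ⊢
    refine ⟨Finset.sdiff_subset, ?_⟩
    rw [Finset.card_sdiff_of_subset hS.1, Finset.card_range, hS.2]
  · intro S hS
    rw [Finset.mem_powersetCard] at hS ⊢
    refine ⟨Finset.sdiff_subset, ?_⟩
    rw [Finset.card_sdiff_of_subset hS.1, Finset.card_range, hS.2]
    omega
  · intro S hS
    exact Finset.sdiff_sdiff_eq_self (subset_range_of_mem_pc hS)
  · intro S hS
    exact Finset.sdiff_sdiff_eq_self (subset_range_of_mem_pc hS)
  · intro S hS
    rw [Finset.sdiff_sdiff_eq_self (subset_range_of_mem_pc hS)]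
    ring

theorem master (m : ℕ) : ∀ x : ℕ → ℝ,
    (∀ i j, i < m → j < m → x i = x j → i = j) →
    ∑ S ∈ powersetCard ((m + 1) / 2) (range m), vg x S * vg x (range m \ S)
      = 2 ^ (m / 2) * vg x ((range m).filter (fun i => i % 2 = 0))
          * vg x ((range m).filter (fun i => i % 2 = 1)) := by
  induction m with
  | zero =>
      intro x _
      rw [show ((0 + 1) / 2 : ℕ) = 0 from rfl, Finset.powersetCard_zero,
        Finset.sum_singleton]
      norm_num [vg_empty]
  | succ m IH =>
      intro x hinj
      rcases Nat.lt_or_ge m 2 with hm2 | hm2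
      · interval_cases m
        · -- proving for m+1 = 1
          rw [show ((1 + 1) / 2 : ℕ) = 1 from rfl,
            show powersetCard 1 (range 1) = {{0}} from by decide,
            Finset.sum_singleton,
            show range 1 \ {0} = (∅ : Finset ℕ) from by decide,
            show (range 1).filter (fun i => i % 2 = 0) = {0} from by decide,
            show (range 1).filter (fun i => i % 2 = 1) = (∅ : Finset ℕ) from by decide]
          norm_num [vg_empty, vg_singleton]
        · -- m+1 = 2
          rw [show ((2 + 1) / 2 : ℕ) = 1 from rfl,
            show powersetCard 1 (range 2) = {{0}, {1}} from by decide,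
            Finset.sum_pair (by decide : ({0} : Finset ℕ) ≠ {1}),
            show range 2 \ {0} = ({1} : Finset ℕ) from by decide,
            show range 2 \ {1} = ({0} : Finset ℕ) from by decide,
            show (range 2).filter (fun i => i % 2 = 0) = {0} from by decide,
            show (range 2).filter (fun i => i % 2 = 1) = {1} from by decide]
          norm_num [vg_singleton]
      · -- main case : m ≥ 2
        set k := (m + 1 + 1) / 2 with hk
        have hk1 : 1 ≤ k := by omega
        have hk2 : 2 ≤ k := by omega
        set Ev1 := (range (m + 1)).filter (fun i => i % 2 = 0) with hEv1
        set Od1 := (range (m + 1)).filter (fun i => i % 2 = 1) with hOd1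
        have hEv1c : Ev1.card = k := by rw [hEv1, Ev_card]
        have hOd1c : Od1.card = (m + 1) / 2 := Od_card (m + 1)
        have hEv1sub : Ev1 ⊆ range (m + 1) := Finset.filter_subset _ _
        have hOd1sub : Od1 ⊆ range (m + 1) := Finset.filter_subset _ _
        set Lp : ℝ[X] := ∑ S ∈ powersetCard k (range (m + 1)),
          Pv x m S * Pv x m (range (m + 1) \ S) with hLp
        set Rp : ℝ[X] := C ((2 : ℝ) ^ ((m + 1) / 2)) * (Pv x m Ev1 * Pv x m Od1) with hRp
        have hIHx := IH x (fun i j hi hj h => hinj i j (by omega) (by omega) h)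
        -- evaluations
        have hevalL : ∀ y, Lp.eval y = ∑ S ∈ powersetCard k (range (m + 1)),
            vg (Function.update x m y) S * vg (Function.update x m y) (range (m + 1) \ S) := by
          intro y
          rw [hLp, eval_finset_sum]
          refine Finset.sum_congr rfl fun S hS => ?_
          rw [eval_mul, Pv_eval x m S (subset_range_of_mem_pc hS),
            Pv_eval x m _ Finset.sdiff_subset]
        have hevalR : ∀ y, Rp.eval y = 2 ^ ((m + 1) / 2) *
            vg (Function.update x m y) Ev1 * vg (Function.update x m y) Od1 := by
          intro y
          rw [hRp, eval_mul, eval_mul, eval_C, Pv_eval x m _ hEv1sub, Pv_eval x m _ hOd1sub]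
          ring
        -- degree bounds
        have hdegL : Lp.natDegree ≤ k - 1 := by
          rw [hLp]
          refine natDegree_sum_le_of_forall_le _ _ fun S hS => ?_
          have hsub := subset_range_of_mem_pc hS
          have hcard := card_of_mem_pc hS
          refine le_trans (natDegree_mul_le) ?_
          by_cases hmS : m ∈ S
          · have hmc : m ∉ range (m + 1) \ S := fun h => (Finset.mem_sdiff.1 h).2 hmS
            rw [Pv_natDegree_notmem hmc]
            have := Pv_natDegree_le (x := x) hmS
            omega
          · have hmc : m ∈ range (m + 1) \ S :=
              Finset.mem_sdiff.2 ⟨self_mem_range_succ m, hmS⟩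
            rw [Pv_natDegree_notmem hmS]
            have h1 := Pv_natDegree_le (x := x) hmc
            have h2 : (range (m + 1) \ S).card = m + 1 - k := by
              rw [Finset.card_sdiff_of_subset hsub, Finset.card_range, hcard]
            rw [h2] at h1
            omega
        have hdegR : Rp.natDegree ≤ k - 1 := by
          rw [hRp]
          refine le_trans (natDegree_mul_le) (le_trans (add_le_add (natDegree_C _).le
            natDegree_mul_le) ?_)
          rcases Nat.mod_two_eq_zero_or_one m with hm | hm
          · have hmEv : m ∈ Ev1 := Finset.mem_filter.2 ⟨self_mem_range_succ m, hm⟩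
            have hmOd : m ∉ Od1 := fun h => by
              have := (Finset.mem_filter.1 h).2; omega
            have h1 := Pv_natDegree_le (x := x) hmEv
            rw [hEv1c] at h1
            rw [Pv_natDegree_notmem hmOd]
            omega
          · have hmEv : m ∉ Ev1 := fun h => by
              have := (Finset.mem_filter.1 h).2; omega
            have hmOd : m ∈ Od1 := Finset.mem_filter.2 ⟨self_mem_range_succ m, hm⟩
            have h1 := Pv_natDegree_le (x := x) hmOd
            rw [hOd1c] at h1
            rw [Pv_natDegree_notmem hmEv]
            omega
        -- the coefficient identity
        have hcoef : Lp.coeff (k - 1) = Rp.coeff (k - 1) := by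
          have hsplit : Lp.coeff (k - 1) =
              (∑ S ∈ (powersetCard k (range (m + 1))).filter (fun S => m ∈ S),
                (Pv x m S * Pv x m (range (m + 1) \ S)).coeff (k - 1))
              + ∑ S ∈ (powersetCard k (range (m + 1))).filter (fun S => ¬ m ∈ S),
                (Pv x m S * Pv x m (range (m + 1) \ S)).coeff (k - 1) := by
            rw [hLp, finset_sum_coeff,
              Finset.sum_filter_add_sum_filter_not (powersetCard k (range (m + 1)))
                (fun S => m ∈ S)]
          have h1 : ∀ S ∈ (powersetCard k (range (m + 1))).filter (fun S => m ∈ S),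
              (Pv x m S * Pv x m (range (m + 1) \ S)).coeff (k - 1)
                = vg x (S.erase m) * vg x (range (m + 1) \ S) := by
            intro S hS
            rw [Finset.mem_filter] at hS
            have hc := card_of_mem_pc hS.1
            have hmc : m ∉ range (m + 1) \ S := fun h => (Finset.mem_sdiff.1 h).2 hS.2
            rw [Pv_notmem_eq hmc, coeff_mul_C, show k - 1 = S.card - 1 from by rw [hc],
              Pv_coeff_top hS.2]
          rcases Nat.mod_two_eq_zero_or_one m with hm | hm
          · -- m even : only S ∋ m contributes
            have h2 : ∀ S ∈ (powersetCard k (range (m + 1))).filter (fun S => ¬ m ∈ S),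
                (Pv x m S * Pv x m (range (m + 1) \ S)).coeff (k - 1) = 0 := by
              intro S hS
              rw [Finset.mem_filter] at hS
              have hsub := subset_range_of_mem_pc hS.1
              have hc := card_of_mem_pc hS.1
              have hmc : m ∈ range (m + 1) \ S :=
                Finset.mem_sdiff.2 ⟨self_mem_range_succ m, hS.2⟩
              rw [Pv_notmem_eq hS.2, coeff_C_mul]
              have hdeg : (Pv x m (range (m + 1) \ S)).natDegree < k - 1 := by
                refine lt_of_le_of_lt (Pv_natDegree_le hmc) ?_
                rw [Finset.card_sdiff_of_subset hsub, Finset.card_range, hc]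
                omega
              rw [coeff_eq_zero_of_natDegree_lt hdeg, mul_zero]
            have hLc : Lp.coeff (k - 1)
                = ∑ T ∈ powersetCard (k - 1) (range m), vg x T * vg x (range m \ T) := by
              rw [hsplit, Finset.sum_congr rfl h1, Finset.sum_congr rfl h2,
                Finset.sum_const_zero, add_zero, sum_erase_bij x m k hk1]
            have hmEv : m ∈ Ev1 := Finset.mem_filter.2 ⟨self_mem_range_succ m, hm⟩
            have hmOd : m ∉ Od1 := fun h => by
              have := (Finset.mem_filter.1 h).2; omega
            have hRc : Rp.coeff (k - 1)
                = 2 ^ ((m + 1) / 2) * (vg x (Ev1.erase m) * vg x Od1) := by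
              rw [hRp, coeff_C_mul, Pv_notmem_eq hmOd, coeff_mul_C,
                show k - 1 = Ev1.card - 1 from by rw [hEv1c], Pv_coeff_top hmEv]
            rw [hLc, hRc, hEv1, hOd1, Ev_succ_even hm, Od_succ_even hm,
              show k - 1 = (m + 1) / 2 from by omega, hIHx,
              show (m + 1) / 2 = m / 2 from by omega]
            ring
          · -- m odd : both halves contribute
            have h2 : ∀ S ∈ (powersetCard k (range (m + 1))).filter (fun S => ¬ m ∈ S),
                (Pv x m S * Pv x m (range (m + 1) \ S)).coeff (k - 1)
                  = vg x S * vg x ((range (m + 1) \ S).erase m) := by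
              intro S hS
              rw [Finset.mem_filter] at hS
              have hsub := subset_range_of_mem_pc hS.1
              have hc := card_of_mem_pc hS.1
              have hmc : m ∈ range (m + 1) \ S :=
                Finset.mem_sdiff.2 ⟨self_mem_range_succ m, hS.2⟩
              have hcc : (range (m + 1) \ S).card = m + 1 - k := by
                rw [Finset.card_sdiff_of_subset hsub, Finset.card_range, hc]
              rw [Pv_notmem_eq hS.2, coeff_C_mul,
                show k - 1 = (range (m + 1) \ S).card - 1 from by rw [hcc]; omega,
                Pv_coeff_top hmc]
            have hLc : Lp.coeff (k - 1)
                = (∑ T ∈ powersetCard (k - 1) (range m), vg x T * vg x (range m \ T))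
                  + ∑ T ∈ powersetCard k (range m), vg x T * vg x (range m \ T) := by
              rw [hsplit, Finset.sum_congr rfl h1, Finset.sum_congr rfl h2,
                sum_erase_bij x m k hk1, sum_noterase_bij x m k]
            have hflip : ∑ T ∈ powersetCard (k - 1) (range m), vg x T * vg x (range m \ T)
                = ∑ T ∈ powersetCard k (range m), vg x T * vg x (range m \ T) := by
              rw [sum_compl_symm x m (k - 1) (by omega),
                show m - (k - 1) = k from by omega]
            have hmEv : m ∉ Ev1 := fun h => by
              have := (Finset.mem_filter.1 h).2; omega
            have hmOd : m ∈ Od1 := Finset.mem_filter.2 ⟨self_mem_range_succ m, hm⟩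
            have hRc : Rp.coeff (k - 1)
                = 2 ^ ((m + 1) / 2) * (vg x Ev1 * vg x (Od1.erase m)) := by
              rw [hRp, coeff_C_mul, Pv_notmem_eq hmEv, coeff_C_mul,
                show k - 1 = Od1.card - 1 from by rw [hOd1c]; omega, Pv_coeff_top hmOd]
            rw [hLc, hflip, hRc, hEv1, hOd1, Ev_succ_odd hm, Od_succ_odd hm,
              show (k : ℕ) = (m + 1) / 2 from by omega, hIHx,
              show ((m + 1) / 2 : ℕ) = m / 2 + 1 from by omega]
            ring
        -- roots
        set J := (range m).filter (fun j => j % 2 = m % 2) with hJ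
        have hJcard : J.card = k - 1 := by
          rcases Nat.mod_two_eq_zero_or_one m with hm | hm
          · have hJ' : J = (range m).filter (fun i => i % 2 = 0) := by
              rw [hJ]; exact Finset.filter_congr fun i _ => by omega
            rw [hJ', Ev_card]; omega
          · have hJ' : J = (range m).filter (fun i => i % 2 = 1) := by
              rw [hJ]; exact Finset.filter_congr fun i _ => by omega
            rw [hJ', Od_card]; omega
        have hroots : ∀ z ∈ J.image x, (Lp - Rp).eval z = 0 := by
          intro z hz
          obtain ⟨j, hj, rfl⟩ := Finset.mem_image.1 hz
          rw [hJ, Finset.mem_filter, Finset.mem_range] at hj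
          have hxupd : Function.update x m (x j) j = x j :=
            Function.update_of_ne (by omega) _ _
          have hLz : Lp.eval (x j) = 0 := by
            rw [hevalL]
            refine sum_zero k hj.1 hj.2 ?_
            rw [hxupd, Function.update_self]
          have hRz : Rp.eval (x j) = 0 := by
            rw [hevalR]
            rcases Nat.mod_two_eq_zero_or_one m with hm | hm
            · have h0 : vg (Function.update x m (x j)) Ev1 = 0 := by
                refine vg_eq_zero (a := j) (b := m) ?_ ?_ hj.1 ?_
                · exact Finset.mem_filter.2 ⟨Finset.mem_range.2 (by omega), by omega⟩
                · exact Finset.mem_filter.2 ⟨self_mem_range_succ m, hm⟩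
                · rw [hxupd, Function.update_self]
              rw [h0]; ring
            · have h0 : vg (Function.update x m (x j)) Od1 = 0 := by
                refine vg_eq_zero (a := j) (b := m) ?_ ?_ hj.1 ?_
                · exact Finset.mem_filter.2 ⟨Finset.mem_range.2 (by omega), by omega⟩
                · exact Finset.mem_filter.2 ⟨self_mem_range_succ m, hm⟩
                · rw [hxupd, Function.update_self]
              rw [h0]; ring
          rw [eval_sub, hLz, hRz, sub_zero]
        have hJim : (J.image x).card = k - 1 := by
          rw [Finset.card_image_of_injOn, hJcard]
          intro i hi j hj hij
          simp only [hJ, Finset.coe_filter, Set.mem_setOf_eq, Finset.mem_range] at hi hj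
          exact hinj i j (by omega) (by omega) hij
        have hdegsub : (Lp - Rp).natDegree ≤ k - 1 :=
          le_trans (natDegree_sub_le _ _) (max_le hdegL hdegR)
        have hcoef0 : (Lp - Rp).coeff (k - 1) = 0 := by
          rw [coeff_sub, hcoef, sub_self]
        have hlt : (Lp - Rp).natDegree < k - 1 := by
          rcases eq_or_ne (Lp - Rp) 0 with h0 | h0
          · rw [h0, natDegree_zero]; omega
          · rcases lt_or_eq_of_le hdegsub with h | h
            · exact h
            · exfalso
              apply Polynomial.leadingCoeff_ne_zero.2 h0
              rw [Polynomial.leadingCoeff, h, hcoef0]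
        have hzero : Lp - Rp = 0 :=
          Polynomial.eq_zero_of_natDegree_lt_card_of_eval_eq_zero' _ (J.image x) hroots
            (by rw [hJim]; exact hlt)
        have hLR : Lp = Rp := sub_eq_zero.1 hzero
        have hfin := congrArg (eval (x m)) hLR
        rw [hevalL, hevalR, Function.update_eq_self] at hfin
        exact hfin

def extFin {M : ℕ} (x : Fin M → ℝ) : ℕ → ℝ := fun i => if h : i < M then x ⟨i, h⟩ else 0

lemma extFin_val {M : ℕ} (x : Fin M → ℝ) (i : Fin M) : extFin x i.1 = x i := by
  rw [extFin]
  simp only [i.2, dif_pos]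


/-- For `x_0 < x_1 < ⋯ < x_{2n}`, the sum over `(n+1)`-element subsets `S` of
`Δ(x_S) Δ(x_{Sᶜ})` equals `2^n Δ(x_0,x_2,…,x_{2n}) Δ(x_1,x_3,…,x_{2n-1})`. -/
theorem sum_vandermonde_pairs_odd (n : ℕ) (hn : 0 < n) (x : Fin (2 * n + 1) → ℝ)
    (hx : StrictMono x) :
    (∑ S ∈ Finset.powersetCard (n + 1) (Finset.univ : Finset (Fin (2 * n + 1))),
        vand x S * vand x Sᶜ)
      = 2 ^ n *
        vand (fun i : Fin (n + 1) => x ⟨2 * i.1, by have := i.2; omega⟩) Finset.univ *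
        vand (fun i : Fin n => x ⟨2 * i.1 + 1, by have := i.2; omega⟩) Finset.univ := by
  classical
  set x' : ℕ → ℝ := extFin x with hx'
  have hinj : ∀ i j, i < 2 * n + 1 → j < 2 * n + 1 → x' i = x' j → i = j := by
    intro i j hi hj h
    have h' : x ⟨i, hi⟩ = x ⟨j, hj⟩ := by
      rw [← extFin_val x ⟨i, hi⟩, ← extFin_val x ⟨j, hj⟩]
      exact h
    exact congrArg Fin.val (hx.injective h')
  have hmain := master (2 * n + 1) x' hinj
  rw [show (2 * n + 1 + 1) / 2 = n + 1 from by omega,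
    show (2 * n + 1) / 2 = n from by omega] at hmain
  -- identify LHS
  have hLHS : (∑ S ∈ Finset.powersetCard (n + 1) (Finset.univ : Finset (Fin (2 * n + 1))),
      vand x S * vand x Sᶜ)
      = ∑ S ∈ powersetCard (n + 1) (range (2 * n + 1)),
          vg x' S * vg x' (range (2 * n + 1) \ S) := by
    refine Finset.sum_nbij (fun S => S.map Fin.valEmbedding) ?_ ?_ ?_ ?_
    · intro S hS
      rw [Finset.mem_powersetCard] at hS ⊢
      refine ⟨?_, by rw [Finset.card_map, hS.2]⟩
      intro i hi
      obtain ⟨j, hj, rfl⟩ := Finset.mem_map.1 hi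
      exact Finset.mem_range.2 j.2
    · intro S _ T _ h
      exact Finset.map_injective _ h
    · intro T hT
      simp only [Finset.mem_coe, Finset.mem_powersetCard] at hT
      rw [Set.mem_image]
      have hsub : ∀ a ∈ T, a < 2 * n + 1 := fun a ha => Finset.mem_range.1 (hT.1 ha)
      refine ⟨T.attachFin hsub, ?_, ?_⟩
      · simp only [Finset.mem_coe, Finset.mem_powersetCard]
        exact ⟨Finset.subset_univ _, by rw [Finset.card_attachFin, hT.2]⟩
      · ext j
        simp only [Finset.mem_map, Finset.mem_attachFin, Fin.valEmbedding_apply]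
        constructor
        · rintro ⟨i, hi, rfl⟩; exact hi
        · intro hj; exact ⟨⟨j, hsub j hj⟩, hj, rfl⟩
    · intro S hS
      have hcompl : range (2 * n + 1) \ S.map Fin.valEmbedding = Sᶜ.map Fin.valEmbedding := by
        ext j
        simp only [Finset.mem_sdiff, Finset.mem_range, Finset.mem_map, Finset.mem_compl,
          Fin.valEmbedding_apply]
        constructor
        · rintro ⟨hj, h2⟩
          exact ⟨⟨j, hj⟩, fun hmem => h2 ⟨⟨j, hj⟩, hmem, rfl⟩, rfl⟩
        · rintro ⟨i, hi, rfl⟩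
          refine ⟨i.2, ?_⟩
          rintro ⟨i', hi', hval⟩
          exact hi (by rwa [Fin.val_injective hval] at hi')
      have hxc : x' ∘ (Fin.valEmbedding : Fin (2 * n + 1) ↪ ℕ) = x := by
        funext i
        exact extFin_val x i
      rw [hcompl, vg_map _ (fun i j h => by simpa using h), hxc,
        vg_map _ (fun i j h => by simpa using h), hxc]
      rfl
  -- identify even part
  have hEV : vg x' ((range (2 * n + 1)).filter (fun i => i % 2 = 0))
      = vand (fun i : Fin (n + 1) => x ⟨2 * i.1, by have := i.2; omega⟩) Finset.univ := by
    have himg : (range (2 * n + 1)).filter (fun i => i % 2 = 0)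
        = (univ : Finset (Fin (n + 1))).map ⟨fun i => 2 * i.1, fun i j h => by
            dsimp only at h
            exact Fin.val_injective (by omega)⟩ := by
      rw [Ev_eq, show (2 * n + 1 + 1) / 2 = n + 1 from by omega]
      ext j
      simp only [Finset.mem_image, Finset.mem_range, Finset.mem_map, Finset.mem_univ,
        true_and, Function.Embedding.coeFn_mk]
      constructor
      · rintro ⟨i, hi, rfl⟩; exact ⟨⟨i, hi⟩, rfl⟩
      · rintro ⟨i, rfl⟩; exact ⟨i.1, i.2, rfl⟩
    rw [himg, vg_map _ (fun i j h => by
      change 2 * i.1 < 2 * j.1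
      have := (Fin.lt_iff_val_lt_val).1 h
      omega)]
    have hfun : x' ∘ (fun i : Fin (n + 1) => 2 * i.1)
        = (fun i : Fin (n + 1) => x ⟨2 * i.1, by have := i.2; omega⟩) := by
      funext i
      exact extFin_val x ⟨2 * i.1, by have := i.2; omega⟩
    exact congrArg (fun f => vg f (univ : Finset (Fin (n + 1)))) hfun
  -- identify odd part
  have hOD : vg x' ((range (2 * n + 1)).filter (fun i => i % 2 = 1))
      = vand (fun i : Fin n => x ⟨2 * i.1 + 1, by have := i.2; omega⟩) Finset.univ := by
    have himg : (range (2 * n + 1)).filter (fun i => i % 2 = 1)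
        = (univ : Finset (Fin n)).map ⟨fun i => 2 * i.1 + 1, fun i j h => by
            dsimp only at h
            exact Fin.val_injective (by omega)⟩ := by
      rw [Od_eq, show (2 * n + 1) / 2 = n from by omega]
      ext j
      simp only [Finset.mem_image, Finset.mem_range, Finset.mem_map, Finset.mem_univ,
        true_and, Function.Embedding.coeFn_mk]
      constructor
      · rintro ⟨i, hi, rfl⟩; exact ⟨⟨i, hi⟩, rfl⟩
      · rintro ⟨i, rfl⟩; exact ⟨i.1, i.2, rfl⟩
    rw [himg, vg_map _ (fun i j h => by
      change 2 * i.1 + 1 < 2 * j.1 + 1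
      have := (Fin.lt_iff_val_lt_val).1 h
      omega)]
    have hfun : x' ∘ (fun i : Fin n => 2 * i.1 + 1)
        = (fun i : Fin n => x ⟨2 * i.1 + 1, by have := i.2; omega⟩) := by
      funext i
      exact extFin_val x ⟨2 * i.1 + 1, by have := i.2; omega⟩
    exact congrArg (fun f => vg f (univ : Finset (Fin n))) hfun
  rw [hLHS, hmain, hEV, hOD]
end

section
/- Fix an integer l > 0 and a function G: ℝ → ℝ supported on at least l points. If functions F_0,...,F_{l-1}: ℝ → ℝ satisfy det(F_j(x_i))_{0≤i,j<l} = c·∏_i G(x_i)·∏_{i<j}(x_j−x_i) for some nonzero constant c and all real x_0,...,x_{l-1}, then there exist l linearly independent polynomials p_0,...,p_{l-1}, each of degree at most l−1, with F_i(x) = p_i(x)·G(x) for all i and all x. Conversely, if such polynomials exist then the determinant identity holds with some nonzero constant c. -/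
open Polynomial Matrix Finset

/-- Characterization of orthogonal pseudo-ensembles which are orthogonal
ensembles:  `det(F_j(x_i)) = c ∏_i G(x_i) ∏_{i<j}(x_j - x_i)` for some
nonzero constant `c` iff each `F_i` is of the form `p_i · G` for linearly
independent polynomials `p_i` of degree at most `l - 1`. -/
theorem pseudo_orthogonal_ensemble_iff (l : ℕ) (hl : 0 < l) (G : ℝ → ℝ)
    (hG : ∃ s : Finset ℝ, l ≤ s.card ∧ ∀ x ∈ s, G x ≠ 0)
    (F : Fin l → ℝ → ℝ) :
    (∃ c : ℝ, c ≠ 0 ∧ ∀ x : Fin l → ℝ,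
        (Matrix.of fun i j : Fin l => F j (x i)).det
          = c * (∏ i : Fin l, G (x i)) * ∏ i : Fin l, ∏ j ∈ Finset.Ioi i, (x j - x i))
    ↔ (∃ p : Fin l → Polynomial ℝ, LinearIndependent ℝ p ∧
        (∀ i, (p i).natDegree ≤ l - 1) ∧
        ∀ i x, F i x = (p i).eval x * G x) := by
  constructor
  · rintro ⟨c, hc, hdet⟩
    obtain ⟨s, hcard, hGs⟩ := hG
    obtain ⟨t, hts, htc⟩ := Finset.exists_subset_card_eq hcard
    set e := t.orderIsoOfFin htc with he
    set y : Fin l → ℝ := fun i => (e i : ℝ) with hy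
    have hymono : StrictMono y := fun i j hij => by
      have := e.strictMono hij
      exact_mod_cast this
    have hGy : ∀ i, G (y i) ≠ 0 := fun i => hGs _ (hts (e i).2)
    set A : Matrix (Fin l) (Fin l) ℝ := Matrix.of (fun i j => F j (y i)) with hA
    have hvand : (∏ i : Fin l, ∏ j ∈ Finset.Ioi i, (y j - y i)) ≠ 0 := by
      rw [Finset.prod_ne_zero_iff]
      intro i _
      rw [Finset.prod_ne_zero_iff]
      intro j hj
      exact sub_ne_zero.mpr (hymono (Finset.mem_Ioi.mp hj)).ne'
    have hdetA : A.det ≠ 0 := by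
      rw [hA, hdet y]
      exact mul_ne_zero (mul_ne_zero hc (Finset.prod_ne_zero_iff.mpr fun i _ => hGy i)) hvand
    -- polynomials q k
    set q : Fin l → Polynomial ℝ := fun k =>
      ∏ i : Fin l, ∏ j ∈ Finset.Ioi i,
        (if j = k then X - C (y i) else if i = k then C (y j) - X else C (y j - y i)) with hq
    have hqeval : ∀ k x, (q k).eval x =
        ∏ i : Fin l, ∏ j ∈ Finset.Ioi i,
          (Function.update y k x j - Function.update y k x i) := by
      intro k x
      rw [hq]
      simp only [eval_prod]
      refine Finset.prod_congr rfl fun i _ => Finset.prod_congr rfl fun j hj => ?_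
      have hij : i < j := Finset.mem_Ioi.mp hj
      by_cases hjk : j = k
      · have hik : i ≠ k := fun h => absurd hij (by rw [h, hjk]; exact lt_irrefl k)
        simp [hjk, hik, Function.update]
      · by_cases hik : i = k
        · simp [hjk, hik, Function.update]
        · simp [hjk, hik, Function.update]
    have hqdeg : ∀ k, (q k).natDegree ≤ l - 1 := by
      intro k
      have hfac : ∀ (i : Fin l), ∀ j ∈ Finset.Ioi i,
          ((if j = k then X - C (y i) else if i = k then C (y j) - X else C (y j - y i)) : Polynomial ℝ).natDegree
            ≤ if i = k ∨ j = k then 1 else 0 := by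
        intro i j hj
        by_cases hjk : j = k
        · simp [hjk, Polynomial.natDegree_X_sub_C]
        · by_cases hik : i = k
          · simp only [hjk, hik, if_false, if_true, true_or, if_pos]
            refine le_trans (Polynomial.natDegree_sub_le _ _) ?_
            simp
          · simp [hjk, hik]
      have step1 : (q k).natDegree ≤
          ∑ i : Fin l, ∑ j ∈ Finset.Ioi i, (if i = k ∨ j = k then 1 else 0) := by
        rw [hq]
        refine le_trans (Polynomial.natDegree_prod_le _ _) (Finset.sum_le_sum fun i _ => ?_)
        exact le_trans (Polynomial.natDegree_prod_le _ _) (Finset.sum_le_sum (hfac i))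
      have step2 : ∑ i : Fin l, ∑ j ∈ Finset.Ioi i, (if i = k ∨ j = k then (1:ℕ) else 0)
          = l - 1 := by
        rw [← Finset.add_sum_erase _ _ (Finset.mem_univ k)]
        have hA2 : ∑ i ∈ Finset.univ.erase k, ∑ j ∈ Finset.Ioi i,
            (if i = k ∨ j = k then (1:ℕ) else 0) = (k:ℕ) := by
          have h3 : ∀ i ∈ Finset.univ.erase k, ∑ j ∈ Finset.Ioi i,
              (if i = k ∨ j = k then (1:ℕ) else 0) = if i ∈ Finset.Iio k then 1 else 0 := by
            intro i hi
            have hik := Finset.ne_of_mem_erase hi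
            simp only [hik, false_or]
            rw [Finset.sum_ite_eq' (Finset.Ioi i) k (fun _ => (1:ℕ))]
            simp [Finset.mem_Ioi, Finset.mem_Iio]
          rw [Finset.sum_congr rfl h3, Finset.sum_erase _ (by simp)]
          rw [Finset.sum_ite_mem, Finset.univ_inter, Finset.sum_const, Fin.card_Iio]
          simp
        rw [hA2]
        have h4 : ∑ j ∈ Finset.Ioi k, (if k = k ∨ j = k then (1:ℕ) else 0)
            = (Finset.Ioi k).card := by simp
        rw [h4, Fin.card_Ioi]
        have := k.is_lt
        omega
      rw [← step2]; exact step1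
    -- key determinant evaluation
    have hrow : ∀ (k : Fin l) (x : ℝ),
        (Matrix.of fun i j : Fin l => F j (Function.update y k x i)) =
          A.updateRow k (fun j => F j x) := by
      intro k x
      ext i j
      by_cases hik : i = k
      · subst hik; simp [Function.update, Matrix.updateRow_apply]
      · simp [Function.update, hik, Matrix.updateRow_apply, hA]
    have hu : ∀ (k : Fin l) (x : ℝ),
        (A.updateRow k (fun j => F j x)).det =
          c * G x * (∏ i ∈ Finset.univ \ {k}, G (y i)) * (q k).eval x := by
      intro k x
      rw [← hrow k x, hdet (Function.update y k x), hqeval k x]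
      have hfn : (fun i => G (Function.update y k x i))
          = Function.update (fun i => G (y i)) k (G x) := by
        funext i; by_cases hik : i = k <;> simp [Function.update, hik]
      have hprod : ∏ i : Fin l, G (Function.update y k x i)
          = G x * ∏ i ∈ Finset.univ \ {k}, G (y i) := by
        rw [show (∏ i : Fin l, G (Function.update y k x i))
            = ∏ i : Fin l, Function.update (fun i => G (y i)) k (G x) i from by rw [← hfn],
          Finset.prod_update_of_mem (Finset.mem_univ k)]
      rw [hprod]
      ring
    have hcr : ∀ (x : ℝ) (i : Fin l),
        (∑ k, A k i * (A.updateRow k (fun j => F j x)).det) = A.det * F i x := by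
      intro x i
      have h1 : Aᵀ.cramer (fun j => F j x) = fun k => (A.updateRow k (fun j => F j x)).det := by
        funext k
        exact Matrix.cramer_transpose_apply A _ k
      have h2 := Matrix.mulVec_cramer Aᵀ (fun j => F j x)
      rw [h1] at h2
      have h3 := congrFun h2 i
      simpa [Matrix.mulVec, dotProduct, Matrix.det_transpose, Matrix.transpose_apply,
        mul_comm] using h3
    set p : Fin l → Polynomial ℝ := fun i =>
      (A.det)⁻¹ • ∑ k, (c * A k i * ∏ j ∈ Finset.univ \ {k}, G (y j)) • q k with hp
    have hpdeg : ∀ i, (p i).natDegree ≤ l - 1 := by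
      intro i
      rw [hp]
      refine le_trans (Polynomial.natDegree_smul_le _ _) ?_
      exact Polynomial.natDegree_sum_le_of_forall_le _ _ fun k _ =>
        le_trans (Polynomial.natDegree_smul_le _ _) (hqdeg k)
    have hpeval : ∀ i x, F i x = eval x (p i) * G x := by
      intro i x
      have key := hcr x i
      simp only [hu] at key
      rw [hp]
      simp only
      rw [eval_smul, eval_finset_sum]
      simp only [eval_smul, smul_eq_mul]
      have hsum : (∑ k, (c * A k i * ∏ j ∈ Finset.univ \ {k}, G (y j)) * eval x (q k)) * G x
          = ∑ k, A k i * ((c * G x * ∏ j ∈ Finset.univ \ {k}, G (y j)) * eval x (q k)) := by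
        rw [Finset.sum_mul]
        exact Finset.sum_congr rfl fun k _ => by ring
      rw [mul_assoc, hsum, key, inv_mul_cancel_left₀ hdetA]
    refine ⟨p, ?_, hpdeg, hpeval⟩
    -- linear independence
    set Mm : Matrix (Fin l) (Fin l) ℝ := Matrix.of (fun i j => eval (y i) (p j)) with hMm
    have hAM : A = Matrix.of fun i j => G (y i) * Mm i j := by
      ext i j
      rw [hA]
      simp only [Matrix.of_apply, hMm, Matrix.of_apply]
      rw [hpeval j (y i)]
      ring
    have hdMM : A.det = (∏ i, G (y i)) * Mm.det := by
      rw [hAM, Matrix.det_mul_column]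
    have hMd : Mm.det ≠ 0 := fun h => hdetA (by rw [hdMM, h, mul_zero])
    rw [Fintype.linearIndependent_iff]
    intro g hg
    have hMv : Mm.mulVec g = 0 := by
      funext i0
      have h5 := congrArg (Polynomial.eval (y i0)) hg
      simp only [eval_finset_sum, eval_smul, smul_eq_mul, Polynomial.eval_zero] at h5
      simpa [Matrix.mulVec, dotProduct, hMm, mul_comm] using h5
    exact fun i => congrFun (Matrix.eq_zero_of_mulVec_eq_zero hMd hMv) i
  · rintro ⟨p, hli, hdeg, hF⟩
    set M : Matrix (Fin l) (Fin l) ℝ := Matrix.of (fun k j => (p j).coeff k) with hM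
    have hdegl : ∀ j, (p j).natDegree < l := fun j => lt_of_le_of_lt (hdeg j) (by omega)
    have hMdet : M.det ≠ 0 := by
      intro h0
      obtain ⟨v, hv, hMv⟩ := Matrix.exists_mulVec_eq_zero_iff.mpr h0
      have hsum : ∑ j, v j • p j = 0 := by
        ext n
        rw [Polynomial.finset_sum_coeff]
        simp only [Polynomial.coeff_smul, smul_eq_mul]
        by_cases hn : n < l
        · have := congrFun hMv ⟨n, hn⟩
          simpa [Matrix.mulVec, dotProduct, hM, mul_comm] using this
        · simp only [Polynomial.coeff_eq_zero_of_natDegree_lt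
            (lt_of_lt_of_le (hdegl _) (le_of_not_gt hn)), mul_zero]
          simp
      exact hv (funext fun i => Fintype.linearIndependent_iff.mp hli v hsum i)
    refine ⟨M.det, hMdet, fun x => ?_⟩
    have hmat : (Matrix.of fun i j : Fin l => F j (x i)) =
        Matrix.of (fun i j => G (x i) * ((Matrix.vandermonde x) * M) i j) := by
      ext i j
      rw [Matrix.of_apply, hF j (x i), Matrix.of_apply, Matrix.mul_apply]
      rw [Polynomial.eval_eq_sum_range' (hdegl j) (x i)]
      rw [← Fin.sum_univ_eq_sum_range (fun k => (p j).coeff k * (x i) ^ k) l]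
      rw [Finset.mul_sum, Finset.sum_mul]
      refine Finset.sum_congr rfl fun k _ => ?_
      simp [Matrix.vandermonde, hM]
      ring
    rw [hmat, Matrix.det_mul_column, Matrix.det_mul, Matrix.det_vandermonde]
    ring
end
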